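/- arXiv:2102.02029 — 9 statements merged into one kernel-verified Lean document; each statement's English description precedes it below -/
import Mathlib

section
/- Let t ≥ 1 and let x_t ∈ K, η_t ∈ [0,1]. Let v_t ∈ argmin_{v∈V} ( vᵀ∇f(x_t) + (βη_t/2)‖x_t − v‖² ), and let x_{t+1} ∈ K satisfy f(x_{t+1}) ≤ f((1−η_t)x_t + η_t v_t). Then f(x_{t+1}) − f* ≤ (1−η_t)(f(x_t) − f*) + (βη_t²/2)( dist(x_t, X*)² + (D*)² ). -/
open scoped RealInnerProductSpace BigOperators
open Metric

private lemma line_deriv {E : Type*} [NormedAddCommGroup E] [InnerProductSpace ℝ E]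
    [CompleteSpace E]
    (f : E → ℝ) (g : E → E) (hgrad : ∀ x, HasGradientAt f (g x) x)
    (x y : E) (t : ℝ) :
    HasDerivAt (fun s : ℝ => f (x + s • (y - x))) ⟪g (x + t • (y - x)), y - x⟫ t := by
  have hc : HasDerivAt (fun s : ℝ => x + s • (y - x)) (y - x) t := by
    simpa using ((hasDerivAt_id t).smul_const (y - x)).const_add x
  have h1 := (hgrad (x + t • (y - x))).hasFDerivAt
  have := h1.comp_hasDerivAt t hc
  simp [InnerProductSpace.toDual_apply_apply] at this
  exact this

private lemma grad_convex_ineq {E : Type*} [NormedAddCommGroup E] [InnerProductSpace ℝ E]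
    [CompleteSpace E]
    (f : E → ℝ) (g : E → E) (hf : ConvexOn ℝ Set.univ f)
    (hgrad : ∀ x, HasGradientAt f (g x) x) (x y : E) :
    f x + ⟪g x, y - x⟫ ≤ f y := by
  have hφ : HasDerivAt (fun s : ℝ => f (x + s • (y - x))) ⟪g x, y - x⟫ 0 := by
    simpa using line_deriv f g hgrad x y 0
  have hts : Filter.Tendsto (slope (fun s : ℝ => f (x + s • (y - x))) 0)
      (nhdsWithin 0 (Set.Ioi 0)) (nhds ⟪g x, y - x⟫) :=
    (hasDerivAt_iff_tendsto_slope.1 hφ).mono_left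
      (nhdsWithin_mono _ (fun t ht => ne_of_gt ht))
  have hkey : ⟪g x, y - x⟫ ≤ f y - f x := by
    refine le_of_tendsto hts ?_
    filter_upwards [Ioc_mem_nhdsGT_of_mem ⟨le_refl (0:ℝ), zero_lt_one⟩] with t ht
    have hcomb : f ((1 - t) • x + t • y) ≤ (1 - t) * f x + t * f y :=
      hf.2 (Set.mem_univ x) (Set.mem_univ y) (by linarith [ht.2]) ht.1.le (by ring)
    have hpt : x + t • (y - x) = (1 - t) • x + t • y := by module
    rw [slope_def_field]
    simp only [sub_zero, hpt]
    rw [div_le_iff₀ ht.1]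
    simp only [zero_smul, add_zero]
    have hr : (1 - t) * f x + t * f y - f x = (f y - f x) * t := by ring
    clear hpt
    linarith
  linarith

private lemma smooth_ineq {E : Type*} [NormedAddCommGroup E] [InnerProductSpace ℝ E]
    [CompleteSpace E]
    (f : E → ℝ) (g : E → E) (β : ℝ) (hβ : 0 ≤ β)
    (hgrad : ∀ x, HasGradientAt f (g x) x)
    (hsmooth : ∀ x y, ‖g x - g y‖ ≤ β * ‖x - y‖) (x y : E) :
    f y ≤ f x + ⟪g x, y - x⟫ + β / 2 * ‖y - x‖ ^ 2 := by
  have hgc : Continuous g := by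
    have : LipschitzWith ⟨β, hβ⟩ g := by
      apply LipschitzWith.of_dist_le_mul
      intro a b
      rw [dist_eq_norm, dist_eq_norm]
      exact hsmooth a b
    exact this.continuous
  set φ' : ℝ → ℝ := fun t => ⟪g (x + t • (y - x)), y - x⟫ with hφ'def
  have hφ'cont : Continuous φ' := by
    apply Continuous.inner
    · exact hgc.comp (by continuity)
    · exact continuous_const
  have hint : IntervalIntegrable φ' MeasureTheory.volume 0 1 :=
    hφ'cont.intervalIntegrable 0 1
  have hFTC : ∫ t in (0:ℝ)..1, φ' t = f y - f x := by
    have := intervalIntegral.integral_eq_sub_of_hasDerivAt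
      (f := fun s : ℝ => f (x + s • (y - x)))
      (fun t _ => line_deriv f g hgrad x y t) hint
    rw [this]
    norm_num
  have hb : ∀ t ∈ Set.Icc (0:ℝ) 1, φ' t ≤ ⟪g x, y - x⟫ + (β * ‖y - x‖ ^ 2) * t := by
    intro t ht
    have h1 : φ' t - ⟪g x, y - x⟫ = ⟪g (x + t • (y - x)) - g x, y - x⟫ := by
      rw [inner_sub_left]
    have h2 : ⟪g (x + t • (y - x)) - g x, y - x⟫ ≤ ‖g (x + t • (y - x)) - g x‖ * ‖y - x‖ :=
      real_inner_le_norm _ _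
    have h3 : ‖g (x + t • (y - x)) - g x‖ ≤ β * (t * ‖y - x‖) := by
      have := hsmooth (x + t • (y - x)) x
      simpa [norm_smul, abs_of_nonneg ht.1] using this
    nlinarith [norm_nonneg (y - x)]
  have hmono : ∫ t in (0:ℝ)..1, φ' t ≤
      ∫ t in (0:ℝ)..1, (⟪g x, y - x⟫ + (β * ‖y - x‖ ^ 2) * t) := by
    apply intervalIntegral.integral_mono_on zero_le_one hint
    · exact (Continuous.intervalIntegrable (by continuity) 0 1)
    · exact hb
  have hcomp : ∫ t in (0:ℝ)..1, (⟪g x, y - x⟫ + (β * ‖y - x‖ ^ 2) * t)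
      = ⟪g x, y - x⟫ + β * ‖y - x‖ ^ 2 / 2 := by
    rw [intervalIntegral.integral_add intervalIntegrable_const
      ((Continuous.intervalIntegrable (by continuity :
        Continuous fun t : ℝ => (β * ‖y - x‖ ^ 2) * t) 0 1))]
    rw [intervalIntegral.integral_const_mul]
    simp [integral_id]
    ring
  rw [hFTC, hcomp] at hmono
  linarith

/-- one-step error reduction for the Frank-Wolfe variant with a
nearest extreme point oracle (Lemma 1 of the paper). -/
theorem fw_nep_one_step_improvement {d : ℕ}
    (K : Set (EuclideanSpace ℝ (Fin d)))
    (hKconv : Convex ℝ K) (hKcomp : IsCompact K)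
    (V : Set (EuclideanSpace ℝ (Fin d))) (hV : V = K.extremePoints ℝ)
    (f : EuclideanSpace ℝ (Fin d) → ℝ)
    (g : EuclideanSpace ℝ (Fin d) → EuclideanSpace ℝ (Fin d))
    (hfconv : ConvexOn ℝ Set.univ f)
    (hgrad : ∀ x, HasGradientAt f (g x) x)
    (β : ℝ) (hβ : 0 < β)
    (hsmooth : ∀ x y, ‖g x - g y‖ ≤ β * ‖x - y‖)
    (fstar : ℝ) (hfstar : ∀ x ∈ K, fstar ≤ f x)
    (Xstar : Set (EuclideanSpace ℝ (Fin d)))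
    (hXstar : Xstar = {x ∈ K | f x = fstar}) (hXne : Xstar.Nonempty)
    (Sstar : Set (EuclideanSpace ℝ (Fin d))) (hSV : Sstar ⊆ V)
    (hSconv : Xstar ⊆ convexHull ℝ Sstar)
    (Dstar : ℝ) (hDstar : ∀ u ∈ Sstar, ∀ v ∈ Sstar, ‖u - v‖ ≤ Dstar)
    (xt : EuclideanSpace ℝ (Fin d)) (hxt : xt ∈ K)
    (η : ℝ) (hη : η ∈ Set.Icc (0:ℝ) 1)
    (vt : EuclideanSpace ℝ (Fin d)) (hvtV : vt ∈ V)
    (hvt : ∀ v ∈ V, ⟪g xt, vt⟫ + β * η / 2 * ‖xt - vt‖ ^ 2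
        ≤ ⟪g xt, v⟫ + β * η / 2 * ‖xt - v‖ ^ 2)
    (xnext : EuclideanSpace ℝ (Fin d)) (hxnextK : xnext ∈ K)
    (hxnext : f xnext ≤ f ((1 - η) • xt + η • vt)) :
    f xnext - fstar ≤ (1 - η) * (f xt - fstar)
      + β * η ^ 2 / 2 * (infDist xt Xstar ^ 2 + Dstar ^ 2) := by
  obtain ⟨hη0, hη1⟩ := hη
  -- f is continuous
  have hfc : Continuous f := by
    rw [continuous_iff_continuousAt]
    exact fun x => (hgrad x).hasFDerivAt.continuousAt
  -- Xstar is closed; get a nearest minimizer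
  have hXclosed : IsClosed Xstar := by
    rw [hXstar]
    exact hKcomp.isClosed.inter (isClosed_eq hfc continuous_const)
  obtain ⟨p, hpX, hpd⟩ := hXclosed.exists_infDist_eq_dist hXne xt
  have hpK : p ∈ K := by rw [hXstar] at hpX; exact hpX.1
  have hpf : f p = fstar := by rw [hXstar] at hpX; exact hpX.2
  have hdist : infDist xt Xstar = ‖xt - p‖ := by rw [hpd, dist_eq_norm]
  -- convex-combination representation of p over Sstar
  have hpS : p ∈ convexHull ℝ Sstar := hSconv hpX
  rw [convexHull_eq] at hpS
  obtain ⟨ι, s, w, z, hw0, hw1, hzS, hcm⟩ := hpS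
  have hp : ∑ i ∈ s, w i • z i = p := by
    rw [← hcm, Finset.centerMass_eq_of_sum_1 _ _ hw1]
  -- Sstar is nonempty, so Dstar ≥ 0
  have hsne : s.Nonempty := by
    rcases s.eq_empty_or_nonempty with h | h
    · rw [h] at hw1; simp at hw1
    · exact h
  obtain ⟨i0, hi0⟩ := hsne
  have hD0 : 0 ≤ Dstar := le_trans (norm_nonneg _) (hDstar _ (hzS i0 hi0) _ (hzS i0 hi0))
  -- each vertex of the representation is within Dstar of p
  have hpz : ∀ i ∈ s, ‖p - z i‖ ≤ Dstar := by
    intro i hi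
    have h1 : p - z i = ∑ j ∈ s, w j • (z j - z i) := by
      simp only [smul_sub]
      rw [Finset.sum_sub_distrib, ← Finset.sum_smul, hw1, one_smul, hp]
    rw [h1]
    refine le_trans (norm_sum_le _ _) ?_
    calc ∑ j ∈ s, ‖w j • (z j - z i)‖ = ∑ j ∈ s, w j * ‖z j - z i‖ := by
          refine Finset.sum_congr rfl fun j hj => ?_
          rw [norm_smul, Real.norm_eq_abs, abs_of_nonneg (hw0 j hj)]
      _ ≤ ∑ j ∈ s, w j * Dstar := Finset.sum_le_sum fun j hj =>
          mul_le_mul_of_nonneg_left (hDstar _ (hzS j hj) _ (hzS i hi)) (hw0 j hj)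
      _ = Dstar := by rw [← Finset.sum_mul, hw1, one_mul]
  -- bias-variance decomposition
  have hbv : ∑ i ∈ s, w i * ‖xt - z i‖ ^ 2
      = ‖xt - p‖ ^ 2 + ∑ i ∈ s, w i * ‖p - z i‖ ^ 2 := by
    have hzero : (∑ i ∈ s, w i • (p - z i)) = (0 : EuclideanSpace ℝ (Fin d)) := by
      simp only [smul_sub]
      rw [Finset.sum_sub_distrib, ← Finset.sum_smul, hw1, one_smul, hp, sub_self]
    have hmid : ∑ i ∈ s, w i * ⟪xt - p, p - z i⟫ = 0 := by
      have h2 : ∑ i ∈ s, w i * ⟪xt - p, p - z i⟫ = ⟪xt - p, ∑ i ∈ s, w i • (p - z i)⟫ := by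
        rw [inner_sum]
        exact Finset.sum_congr rfl fun i _ => (real_inner_smul_right _ _ _).symm
      rw [h2, hzero, inner_zero_right]
    calc ∑ i ∈ s, w i * ‖xt - z i‖ ^ 2
        = ∑ i ∈ s, (w i * ‖xt - p‖ ^ 2 + 2 * (w i * ⟪xt - p, p - z i⟫)
            + w i * ‖p - z i‖ ^ 2) := by
          refine Finset.sum_congr rfl fun i hi => ?_
          have hdecomp : xt - z i = (xt - p) + (p - z i) := by abel
          rw [hdecomp, norm_add_sq_real]
          ring
      _ = ‖xt - p‖ ^ 2 + ∑ i ∈ s, w i * ‖p - z i‖ ^ 2 := by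
          rw [Finset.sum_add_distrib, Finset.sum_add_distrib, ← Finset.sum_mul, hw1,
            ← Finset.mul_sum, hmid]
          ring
  -- variance bound
  have hvar : ∑ i ∈ s, w i * ‖p - z i‖ ^ 2 ≤ Dstar ^ 2 := by
    calc ∑ i ∈ s, w i * ‖p - z i‖ ^ 2 ≤ ∑ i ∈ s, w i * Dstar ^ 2 := by
          refine Finset.sum_le_sum fun i hi => ?_
          have := hpz i hi
          have h2 : ‖p - z i‖ ^ 2 ≤ Dstar ^ 2 := by nlinarith [norm_nonneg (p - z i)]
          exact mul_le_mul_of_nonneg_left h2 (hw0 i hi)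
      _ = Dstar ^ 2 := by rw [← Finset.sum_mul, hw1, one_mul]
  -- oracle inequality against p
  have horacle : ⟪g xt, vt⟫ + β * η / 2 * ‖xt - vt‖ ^ 2
      ≤ ⟪g xt, p⟫ + β * η / 2 * (‖xt - p‖ ^ 2 + Dstar ^ 2) := by
    have hc2 : 0 ≤ β * η / 2 := by positivity
    have hsum : ⟪g xt, vt⟫ + β * η / 2 * ‖xt - vt‖ ^ 2
        ≤ ∑ i ∈ s, w i * (⟪g xt, z i⟫ + β * η / 2 * ‖xt - z i‖ ^ 2) := by
      calc ⟪g xt, vt⟫ + β * η / 2 * ‖xt - vt‖ ^ 2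
          = ∑ i ∈ s, w i * (⟪g xt, vt⟫ + β * η / 2 * ‖xt - vt‖ ^ 2) := by
            rw [← Finset.sum_mul, hw1, one_mul]
        _ ≤ _ := Finset.sum_le_sum fun i hi =>
            mul_le_mul_of_nonneg_left (hvt (z i) (hSV (hzS i hi))) (hw0 i hi)
    have hsplit : ∑ i ∈ s, w i * (⟪g xt, z i⟫ + β * η / 2 * ‖xt - z i‖ ^ 2)
        = ⟪g xt, p⟫ + β * η / 2 * ∑ i ∈ s, w i * ‖xt - z i‖ ^ 2 := by
      rw [← hp, inner_sum]
      rw [Finset.mul_sum, ← Finset.sum_add_distrib]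
      refine Finset.sum_congr rfl fun i hi => ?_
      rw [real_inner_smul_right]
      ring
    refine hsum.trans ?_
    rw [hsplit, hbv]
    have := mul_le_mul_of_nonneg_left (by linarith [hvar] :
      ‖xt - p‖ ^ 2 + ∑ i ∈ s, w i * ‖p - z i‖ ^ 2 ≤ ‖xt - p‖ ^ 2 + Dstar ^ 2) hc2
    linarith
  -- smoothness step
  have hsm := smooth_ineq f g β hβ.le hgrad hsmooth xt ((1 - η) • xt + η • vt)
  have hyx : ((1 - η) • xt + η • vt) - xt = η • (vt - xt) := by module
  rw [hyx] at hsm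
  have hsm2 : f ((1 - η) • xt + η • vt)
      ≤ f xt + η * ⟪g xt, vt - xt⟫ + β / 2 * (η ^ 2 * ‖vt - xt‖ ^ 2) := by
    have h1 : ⟪g xt, η • (vt - xt)⟫ = η * ⟪g xt, vt - xt⟫ := real_inner_smul_right _ _ _
    have h2 : ‖η • (vt - xt)‖ ^ 2 = η ^ 2 * ‖vt - xt‖ ^ 2 := by
      rw [norm_smul]
      rw [Real.norm_eq_abs, abs_of_nonneg hη0]
      ring
    rw [h1, h2] at hsm
    exact hsm
  -- convexity step
  have hcvx := grad_convex_ineq f g hfconv hgrad xt p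
  rw [hpf] at hcvx
  -- combine everything
  have hiv : ⟪g xt, vt - xt⟫ = ⟪g xt, vt⟫ - ⟪g xt, xt⟫ := inner_sub_right _ _ _
  have hip : ⟪g xt, p - xt⟫ = ⟪g xt, p⟫ - ⟪g xt, xt⟫ := inner_sub_right _ _ _
  have hnv : ‖xt - vt‖ = ‖vt - xt‖ := norm_sub_rev _ _
  rw [hnv] at horacle
  rw [hdist]
  have hmul := mul_le_mul_of_nonneg_left horacle hη0
  nlinarith [hmul, hcvx, hsm2, hxnext]
end

section
/- Let (x_t)_{t≥1} and (v_t)_{t≥1} be sequences in K such that x_1 ∈ V and for every t ≥ 1, with η_t = 2/(t+1): v_t ∈ argmin_{v∈V} ( vᵀ∇f(x_t) + (βη_t/2)‖x_t − v‖² ), and x_{t+1} = (1−η̃_t)x_t + η̃_t v_t for some η̃_t ∈ [0,1] satisfying f(x_{t+1}) ≤ min{ f((1−η_t)x_t + η_t v_t), f(x_t) }. Let D_L be the Euclidean diameter of the initial level set {x ∈ K : f(x) ≤ f(x_1)}. Then for all t ≥ 2: f(x_t) − f* ≤ 2β((D*)² + D_L²)/(t+1). -/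
set_option maxHeartbeats 1000000

open scoped RealInnerProductSpace BigOperators
open Metric

section Aux

variable {E : Type*} [NormedAddCommGroup E] [InnerProductSpace ℝ E]

lemma fw_pathDeriv [CompleteSpace E] {f : E → ℝ} {g : E → E}
    (hgrad : ∀ z, HasGradientAt f (g z) z) (x y : E) (s : ℝ) :
    HasDerivAt (fun s : ℝ => f (x + s • (y - x))) ⟪g (x + s • (y - x)), y - x⟫ s := by
  have hpath : HasDerivAt (fun s : ℝ => x + s • (y - x)) (y - x) s := by
    simpa using ((hasDerivAt_id s).smul_const (y - x)).const_add x
  have hf : HasFDerivAt f ((InnerProductSpace.toDual ℝ E) (g (x + s • (y - x))))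
      (x + s • (y - x)) := hasGradientAt_iff_hasFDerivAt.mp (hgrad _)
  have h := hf.comp_hasDerivAt s hpath
  simp at h
  exact h

lemma fw_grad_convex [CompleteSpace E] {f : E → ℝ} {g : E → E}
    (hfconv : ConvexOn ℝ Set.univ f) (hgrad : ∀ z, HasGradientAt f (g z) z) (x y : E) :
    ⟪g x, y - x⟫ ≤ f y - f x := by
  set ψ : ℝ → ℝ := fun s => f (x + s • (y - x)) with hψ
  have hconv : ConvexOn ℝ Set.univ ψ := by
    have h := hfconv.comp_affineMap (AffineMap.lineMap x y)
    have hset : (AffineMap.lineMap x y : ℝ →ᵃ[ℝ] E) ⁻¹' Set.univ = Set.univ := Set.preimage_univ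
    have hfun : (f ∘ (AffineMap.lineMap x y : ℝ →ᵃ[ℝ] E)) = ψ := by
      funext s
      simp [ψ, AffineMap.lineMap_apply, add_comm]
    rw [hset, hfun] at h
    exact h
  have hd0 : HasDerivAt ψ ⟪g x, y - x⟫ 0 := by
    have := fw_pathDeriv hgrad x y 0
    simpa using this
  have hs := hconv.le_slope_of_hasDerivAt (Set.mem_univ 0) (Set.mem_univ 1) one_pos hd0
  have h1 : ψ 1 = f y := by simp [ψ]
  have h0 : ψ 0 = f x := by simp [ψ]
  rw [slope_def_field] at hs
  simp [h1, h0] at hs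
  linarith [hs]

lemma fw_descent [CompleteSpace E] {f : E → ℝ} {g : E → E}
    (hgrad : ∀ z, HasGradientAt f (g z) z) {β : ℝ} (hβ : 0 ≤ β)
    (hsmooth : ∀ x y, ‖g x - g y‖ ≤ β * ‖x - y‖) (x y : E) :
    f y ≤ f x + ⟪g x, y - x⟫ + β / 2 * ‖y - x‖ ^ 2 := by
  set φ : ℝ → ℝ := fun s => f (x + s • (y - x)) - s * ⟪g x, y - x⟫
      - β / 2 * ‖y - x‖ ^ 2 * s ^ 2 with hφ
  have hd : ∀ s : ℝ, HasDerivAt φ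
      (⟪g (x + s • (y - x)), y - x⟫ - ⟪g x, y - x⟫ - β / 2 * ‖y - x‖ ^ 2 * (2 * s)) s := by
    intro s
    have h1 := fw_pathDeriv hgrad x y s
    have h2 : HasDerivAt (fun s : ℝ => s * ⟪g x, y - x⟫) ⟪g x, y - x⟫ s :=
      hasDerivAt_mul_const _
    have h3 : HasDerivAt (fun s : ℝ => β / 2 * ‖y - x‖ ^ 2 * s ^ 2)
        (β / 2 * ‖y - x‖ ^ 2 * (2 * s)) s := by
      have := (hasDerivAt_pow 2 s).const_mul (β / 2 * ‖y - x‖ ^ 2)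
      convert this using 1
      rfl
      rfl
      ring
    exact (h1.sub h2).sub h3
  have hanti : AntitoneOn φ (Set.Icc (0:ℝ) 1) := by
    have hdiff : Differentiable ℝ φ := fun s => (hd s).differentiableAt
    apply antitoneOn_of_deriv_nonpos (convex_Icc 0 1) hdiff.continuous.continuousOn
      hdiff.differentiableOn
    intro s hs
    rw [interior_Icc] at hs
    rw [(hd s).deriv]
    have h1 : ⟪g (x + s • (y - x)) - g x, y - x⟫ ≤ β * s * ‖y - x‖ ^ 2 := by
      calc ⟪g (x + s • (y - x)) - g x, y - x⟫ ≤ ‖g (x + s • (y - x)) - g x‖ * ‖y - x‖ :=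
            real_inner_le_norm _ _
        _ ≤ (β * ‖(x + s • (y - x)) - x‖) * ‖y - x‖ :=
            mul_le_mul_of_nonneg_right (hsmooth _ _) (norm_nonneg _)
        _ = β * s * ‖y - x‖ ^ 2 := by
            rw [add_sub_cancel_left, norm_smul, Real.norm_eq_abs, abs_of_nonneg hs.1.le]
            ring
    rw [inner_sub_left] at h1
    nlinarith [h1]
  have hle := hanti (Set.left_mem_Icc.2 zero_le_one) (Set.right_mem_Icc.2 zero_le_one) zero_le_one
  have h0 : φ 0 = f x := by simp [φ]
  have h1 : φ 1 = f y - ⟪g x, y - x⟫ - β / 2 * ‖y - x‖ ^ 2 := by simp [φ]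
  rw [h0, h1] at hle
  linarith

lemma fw_oracle_bound (gx x xs : E) (c : ℝ) (hc : 0 ≤ c) (S : Set E)
    (hxs : xs ∈ convexHull ℝ S) (D : ℝ) (hD : ∀ u ∈ S, ∀ w ∈ S, ‖u - w‖ ≤ D) (q0 : ℝ)
    (hq : ∀ u ∈ S, q0 ≤ ⟪gx, u⟫ + c * ‖x - u‖ ^ 2) :
    q0 ≤ ⟪gx, xs⟫ + c * (‖x - xs‖ ^ 2 + D ^ 2) := by
  rw [convexHull_eq] at hxs
  obtain ⟨ι, t, w, z, hw0, hw1, hz, hcm⟩ := hxs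
  have hxseq : ∑ i ∈ t, w i • z i = xs := by
    rw [← hcm, Finset.centerMass_eq_of_sum_1 _ _ hw1]
  have hnormb : ∀ i ∈ t, ‖xs - z i‖ ≤ D := by
    intro i hi
    have heq : xs - z i = ∑ j ∈ t, w j • (z j - z i) := by
      simp only [smul_sub]
      rw [Finset.sum_sub_distrib, hxseq, ← Finset.sum_smul, hw1, one_smul]
    rw [heq]
    calc ‖∑ j ∈ t, w j • (z j - z i)‖ ≤ ∑ j ∈ t, ‖w j • (z j - z i)‖ := norm_sum_le _ _
      _ = ∑ j ∈ t, w j * ‖z j - z i‖ := by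
          refine Finset.sum_congr rfl fun j hj => ?_
          rw [norm_smul, Real.norm_eq_abs, abs_of_nonneg (hw0 j hj)]
      _ ≤ ∑ j ∈ t, w j * D := Finset.sum_le_sum fun j hj =>
          mul_le_mul_of_nonneg_left (hD _ (hz j hj) _ (hz i hi)) (hw0 j hj)
      _ = D := by rw [← Finset.sum_mul, hw1, one_mul]
  have hzero : ∑ j ∈ t, w j • (xs - z j) = (0 : E) := by
    simp only [smul_sub]
    rw [Finset.sum_sub_distrib, hxseq, ← Finset.sum_smul, hw1, one_smul, sub_self]
  have hvar : ∑ i ∈ t, w i * ‖x - z i‖ ^ 2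
      = ‖x - xs‖ ^ 2 + ∑ i ∈ t, w i * ‖xs - z i‖ ^ 2 := by
    have hterm : ∀ i ∈ t, w i * ‖x - z i‖ ^ 2
        = w i * ‖x - xs‖ ^ 2 + 2 * ⟪x - xs, w i • (xs - z i)⟫ + w i * ‖xs - z i‖ ^ 2 := by
      intro i hi
      have hsplit : x - z i = (x - xs) + (xs - z i) := by abel
      rw [hsplit, norm_add_sq_real, real_inner_smul_right]
      ring
    have hcross : ∑ i ∈ t, 2 * ⟪x - xs, w i • (xs - z i)⟫ = 0 := by
      rw [← Finset.mul_sum, ← inner_sum, hzero, inner_zero_right, mul_zero]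
    rw [Finset.sum_congr rfl hterm, Finset.sum_add_distrib, Finset.sum_add_distrib, hcross,
      ← Finset.sum_mul, hw1, one_mul, add_zero]
  calc q0 = ∑ i ∈ t, w i * q0 := by rw [← Finset.sum_mul, hw1, one_mul]
    _ ≤ ∑ i ∈ t, w i * (⟪gx, z i⟫ + c * ‖x - z i‖ ^ 2) :=
        Finset.sum_le_sum fun i hi => mul_le_mul_of_nonneg_left (hq _ (hz i hi)) (hw0 i hi)
    _ = ⟪gx, xs⟫ + c * ∑ i ∈ t, w i * ‖x - z i‖ ^ 2 := by
        simp only [mul_add]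
        rw [Finset.sum_add_distrib]
        congr 1
        · rw [← hxseq, inner_sum]
          exact Finset.sum_congr rfl fun i _ => (real_inner_smul_right _ _ _).symm
        · rw [Finset.mul_sum]
          exact Finset.sum_congr rfl fun i _ => by ring
    _ = ⟪gx, xs⟫ + c * (‖x - xs‖ ^ 2 + ∑ i ∈ t, w i * ‖xs - z i‖ ^ 2) := by rw [hvar]
    _ ≤ ⟪gx, xs⟫ + c * (‖x - xs‖ ^ 2 + D ^ 2) := by
        have h2 : ∑ i ∈ t, w i * ‖xs - z i‖ ^ 2 ≤ D ^ 2 := by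
          calc ∑ i ∈ t, w i * ‖xs - z i‖ ^ 2 ≤ ∑ i ∈ t, w i * D ^ 2 :=
              Finset.sum_le_sum fun i hi => mul_le_mul_of_nonneg_left
                (by nlinarith [hnormb i hi, norm_nonneg (xs - z i)]) (hw0 i hi)
            _ = D ^ 2 := by rw [← Finset.sum_mul, hw1, one_mul]
        nlinarith [h2, hc]

end Aux


/-- convergence rate of the Frank-Wolfe variant with a nearest
extreme point oracle (first part of Theorem 1 of the paper). -/
theorem fw_nep_rate {d : ℕ}
    (K : Set (EuclideanSpace ℝ (Fin d)))
    (hKconv : Convex ℝ K) (hKcomp : IsCompact K)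
    (V : Set (EuclideanSpace ℝ (Fin d))) (hV : V = K.extremePoints ℝ)
    (f : EuclideanSpace ℝ (Fin d) → ℝ)
    (g : EuclideanSpace ℝ (Fin d) → EuclideanSpace ℝ (Fin d))
    (hfconv : ConvexOn ℝ Set.univ f)
    (hgrad : ∀ x, HasGradientAt f (g x) x)
    (β : ℝ) (hβ : 0 < β)
    (hsmooth : ∀ x y, ‖g x - g y‖ ≤ β * ‖x - y‖)
    (fstar : ℝ) (hfstar : ∀ x ∈ K, fstar ≤ f x)
    (Xstar : Set (EuclideanSpace ℝ (Fin d)))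
    (hXstar : Xstar = {x ∈ K | f x = fstar}) (hXne : Xstar.Nonempty)
    (Sstar : Set (EuclideanSpace ℝ (Fin d))) (hSV : Sstar ⊆ V)
    (hSconv : Xstar ⊆ convexHull ℝ Sstar)
    (Dstar : ℝ) (hDstar : ∀ u ∈ Sstar, ∀ v ∈ Sstar, ‖u - v‖ ≤ Dstar)
    -- the iterates
    (x v : ℕ → EuclideanSpace ℝ (Fin d)) (ηtil : ℕ → ℝ)
    (hx1 : x 1 ∈ V)
    (hxK : ∀ t, 1 ≤ t → x t ∈ K)
    (hvV : ∀ t, 1 ≤ t → v t ∈ V)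
    (hvopt : ∀ t : ℕ, 1 ≤ t → ∀ u ∈ V,
      ⟪g (x t), v t⟫ + β * (2 / ((t : ℝ) + 1)) / 2 * ‖x t - v t‖ ^ 2
        ≤ ⟪g (x t), u⟫ + β * (2 / ((t : ℝ) + 1)) / 2 * ‖x t - u‖ ^ 2)
    (hηtil : ∀ t, 1 ≤ t → ηtil t ∈ Set.Icc (0:ℝ) 1)
    (hstep : ∀ t : ℕ, 1 ≤ t → x (t + 1) = (1 - ηtil t) • x t + ηtil t • v t)
    (hdec : ∀ t : ℕ, 1 ≤ t →
      f (x (t + 1)) ≤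
        min (f ((1 - 2 / ((t : ℝ) + 1)) • x t + (2 / ((t : ℝ) + 1)) • v t)) (f (x t)))
    -- diameter of the initial level set
    (DL : ℝ)
    (hDL : ∀ u ∈ {y | y ∈ K ∧ f y ≤ f (x 1)}, ∀ w ∈ {y | y ∈ K ∧ f y ≤ f (x 1)},
      ‖u - w‖ ≤ DL) :
    ∀ t : ℕ, 2 ≤ t →
      f (x t) - fstar ≤ 2 * β * (Dstar ^ 2 + DL ^ 2) / ((t : ℝ) + 1) := by
  classical
  set C : ℝ := Dstar ^ 2 + DL ^ 2 with hC
  have hVK : V ⊆ K := by rw [hV]; exact extremePoints_subset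
  have hx1K : x 1 ∈ K := hVK hx1
  obtain ⟨xs, hxsmem⟩ := hXne
  have hxsK : xs ∈ K := by rw [hXstar] at hxsmem; exact hxsmem.1
  have hxsf : f xs = fstar := by rw [hXstar] at hxsmem; exact hxsmem.2
  have hxshull : xs ∈ convexHull ℝ Sstar := hSconv hxsmem
  have hSne : Sstar.Nonempty := convexHull_nonempty_iff.mp ⟨xs, hxshull⟩
  obtain ⟨u0, hu0⟩ := hSne
  have hDstar0 : 0 ≤ Dstar := by
    have h := hDstar u0 hu0 u0 hu0
    simpa using h
  have hmono : ∀ t : ℕ, 1 ≤ t → f (x (t + 1)) ≤ f (x t) :=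
    fun t ht => (hdec t ht).trans (min_le_right _ _)
  have hlev : ∀ t : ℕ, 1 ≤ t → f (x t) ≤ f (x 1) := by
    intro t
    induction t with
    | zero => intro h; omega
    | succ n ih =>
      intro _
      rcases Nat.lt_or_ge n 1 with h | h
      · have hn0 : n = 0 := by omega
        subst hn0
        exact le_refl _
      · exact (hmono n h).trans (ih h)
  have hdist : ∀ t : ℕ, 1 ≤ t → ‖x t - xs‖ ≤ DL := by
    intro t ht
    exact hDL _ ⟨hxK t ht, hlev t ht⟩ _ ⟨hxsK, hxsf ▸ hfstar _ hx1K⟩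
  have hDL0 : 0 ≤ DL := le_trans (norm_nonneg _) (hdist 1 le_rfl)
  have hC0 : 0 ≤ C := by positivity
  -- key recursion
  have key : ∀ t : ℕ, 1 ≤ t →
      f (x (t + 1)) - fstar ≤ (1 - 2 / ((t : ℝ) + 1)) * (f (x t) - fstar)
        + β * (2 / ((t : ℝ) + 1)) ^ 2 / 2 * C := by
    intro t ht
    have hvopt' : ∀ u ∈ Sstar,
        ⟪g (x t), v t⟫ + β * (2 / ((t : ℝ) + 1)) / 2 * ‖x t - v t‖ ^ 2
          ≤ ⟪g (x t), u⟫ + β * (2 / ((t : ℝ) + 1)) / 2 * ‖x t - u‖ ^ 2 :=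
      fun u hu => hvopt t ht u (hSV hu)
    have hdec' := hdec t ht
    have hn1 : (1 : ℝ) ≤ (t : ℝ) := by exact_mod_cast ht
    set η : ℝ := 2 / ((t : ℝ) + 1) with hηdef
    have hη0 : 0 < η := by rw [hηdef]; positivity
    have hη1 : η ≤ 1 := by
      rw [hηdef, div_le_one (by linarith)]; linarith
    have h1 : f (x (t + 1)) ≤ f ((1 - η) • x t + η • v t) :=
      hdec'.trans (min_le_left _ _)
    have hyx : ((1 - η) • x t + η • v t) - x t = η • (v t - x t) := by module
    have hdesc := fw_descent hgrad hβ.le hsmooth (x t) ((1 - η) • x t + η • v t)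
    rw [hyx, real_inner_smul_right, norm_smul, Real.norm_eq_abs, abs_of_nonneg hη0.le,
      mul_pow] at hdesc
    have horacle := fw_oracle_bound (g (x t)) (x t) xs (β * η / 2) (by positivity) Sstar
      hxshull Dstar hDstar (⟪g (x t), v t⟫ + β * η / 2 * ‖x t - v t‖ ^ 2) hvopt'
    have hconv2 := fw_grad_convex hfconv hgrad (x t) xs
    rw [inner_sub_right] at hconv2
    have hinner : ⟪g (x t), v t - x t⟫ = ⟪g (x t), v t⟫ - ⟪g (x t), x t⟫ :=
      inner_sub_right _ _ _
    have hnsym : ‖v t - x t‖ = ‖x t - v t‖ := norm_sub_rev _ _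
    have hd2 : ‖x t - xs‖ ^ 2 ≤ DL ^ 2 :=
      pow_le_pow_left₀ (norm_nonneg _) (hdist t ht) 2
    have s2 : η * (⟪g (x t), v t⟫ + β * η / 2 * ‖x t - v t‖ ^ 2)
        ≤ η * (⟪g (x t), xs⟫ + β * η / 2 * (‖x t - xs‖ ^ 2 + Dstar ^ 2)) :=
      mul_le_mul_of_nonneg_left horacle hη0.le
    have s3 : η * (⟪g (x t), xs⟫ - ⟪g (x t), x t⟫) ≤ η * (f xs - f (x t)) :=
      mul_le_mul_of_nonneg_left hconv2 hη0.le
    have s4 : β * η / 2 * η * ‖x t - xs‖ ^ 2 ≤ β * η / 2 * η * DL ^ 2 :=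
      mul_le_mul_of_nonneg_left hd2 (by positivity)
    rw [hinner, hnsym] at hdesc
    rw [hxsf] at s3
    rw [hC]
    nlinarith [h1, hdesc, s2, s3, s4]
  intro t ht
  induction t, ht using Nat.le_induction with
  | base =>
    have hk := key 1 le_rfl
    norm_num at hk ⊢
    nlinarith [hk, mul_nonneg hβ.le hC0]
  | succ n hn ih =>
    have hk := key n (by omega)
    have hn2 : (2:ℝ) ≤ (n:ℝ) := by exact_mod_cast hn
    have hN1 : (0:ℝ) < (n:ℝ) + 1 := by linarith
    have hN2 : (0:ℝ) < (n:ℝ) + 2 := by linarith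
    have hcoef : (0:ℝ) ≤ 1 - 2 / ((n:ℝ) + 1) := by
      rw [sub_nonneg, div_le_one hN1]; linarith
    have step1 : (1 - 2 / ((n:ℝ)+1)) * (f (x n) - fstar)
        ≤ (1 - 2 / ((n:ℝ)+1)) * (2 * β * C / ((n:ℝ)+1)) :=
      mul_le_mul_of_nonneg_left ih hcoef
    have hident : (1 - 2 / ((n:ℝ)+1)) * (2 * β * C / ((n:ℝ)+1))
        + β * (2 / ((n:ℝ)+1)) ^ 2 / 2 * C = 2 * β * C * (n:ℝ) / ((n:ℝ)+1) ^ 2 := by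
      field_simp
      ring
    have hfrac : 2 * β * C * (n:ℝ) / ((n:ℝ)+1) ^ 2 ≤ 2 * β * C / ((n:ℝ)+2) := by
      rw [div_le_div_iff₀ (by positivity) hN2]
      nlinarith [mul_nonneg hβ.le hC0]
    push_cast
    have h22 : 2 * β * C / ((n:ℝ) + 1 + 1) = 2 * β * C / ((n:ℝ) + 2) := by
      rw [show ((n:ℝ) + 1 + 1) = (n:ℝ) + 2 by ring]
    linarith [hk, step1, hident.le, hident.ge, hfrac, h22.le, h22.ge]
end

section
/- Let d, m be positive integers with m < d, let k = ⌊√(d−m−1)⌋, and let S_1, …, S_k be pairwise disjoint subsets of the coordinate set {m+2, …, d}, each of cardinality k. Let x* = (1/2)·∑_{i=1}^m e_i ∈ ℝ^d, let x_1 = e_{m+1}, and let v_1, …, v_k ∈ [0,1]^d be any vectors such that for every i ∈ {1,…,k} and every coordinate j ∈ {m+1, …, d}: v_i(j) = 1 if j ∈ S_i and v_i(j) = 0 otherwise. Then for every x ∈ conv({x_1, v_1, …, v_k}): (1/2)‖x − x*‖² ≥ 1/4. -/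
open scoped BigOperators

/-- core of the lower bound for linear-optimization-based
Frank-Wolfe-type methods over the hypercube (Theorem 2 of the paper).
Coordinates are 0-indexed: the 1-indexed coordinate set `{m+2, …, d}` becomes
`{j : Fin d | m + 1 ≤ j}`, the vector `x* = (1/2)·∑_{i=1}^m e_i` has value `1/2`
on coordinates `j < m`, and `x_1 = e_{m+1}` is the indicator of coordinate `m`. -/
theorem fw_linear_oracle_lower_bound_core (d m : ℕ) (hm : 0 < m) (hmd : m < d)
    (S : Fin (Nat.sqrt (d - m - 1)) → Finset (Fin d))
    (hSdisj : ∀ i j, i ≠ j → Disjoint (S i) (S j))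
    (hSsub : ∀ i, ∀ c ∈ S i, m + 1 ≤ (c : ℕ))
    (hScard : ∀ i, (S i).card = Nat.sqrt (d - m - 1))
    (xstar x1 : EuclideanSpace ℝ (Fin d))
    (hxstar : ∀ j : Fin d, xstar j = if (j : ℕ) < m then 1 / 2 else 0)
    (hx1 : ∀ j : Fin d, x1 j = if (j : ℕ) = m then 1 else 0)
    (v : Fin (Nat.sqrt (d - m - 1)) → EuclideanSpace ℝ (Fin d))
    (hvbox : ∀ i j, v i j ∈ Set.Icc (0 : ℝ) 1)
    (hv : ∀ i, ∀ j : Fin d, m ≤ (j : ℕ) → v i j = if j ∈ S i then 1 else 0) :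
    ∀ x ∈ convexHull ℝ (insert x1 (Set.range v)),
      (1 : ℝ) / 4 ≤ 1 / 2 * ‖x - xstar‖ ^ 2 := by
  classical
  intro x hx
  set km : Fin d := ⟨m, hmd⟩ with hkm
  have hkmS : ∀ i, km ∉ S i := by
    intro i h
    have := hSsub i km h
    simp [hkm] at this
  
  set L : EuclideanSpace ℝ (Fin d) → ℝ :=
    fun y => y km + (1/((Nat.sqrt (d - m - 1)):ℝ)) * ∑ i, ∑ j ∈ S i, y j with hL
  have hLconv : Convex ℝ {y : EuclideanSpace ℝ (Fin d) | L y = 1} := by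
    intro u hu w hw a b ha hb hab
    simp only [Set.mem_setOf_eq, hL] at hu hw ⊢
    have happ : ∀ j : Fin d, (a • u + b • w) j = a * u j + b * w j := fun j => rfl
    simp only [happ]
    have h1 : (∑ i, ∑ j ∈ S i, (a * u j + b * w j))
        = a * (∑ i, ∑ j ∈ S i, u j) + b * (∑ i, ∑ j ∈ S i, w j) := by
      rw [Finset.mul_sum, Finset.mul_sum, ← Finset.sum_add_distrib]
      exact Finset.sum_congr rfl fun i _ => by
        rw [Finset.mul_sum, Finset.mul_sum, ← Finset.sum_add_distrib]
    rw [h1]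
    linear_combination a * hu + b * hw + hab
  have hsubset : insert x1 (Set.range v) ⊆ {y : EuclideanSpace ℝ (Fin d) | L y = 1} := by
    intro y hy
    rcases hy with rfl | ⟨i, rfl⟩
    · have h1 : y km = 1 := by rw [hx1]; simp [hkm]
      have h0 : ∀ i, ∑ j ∈ S i, y j = 0 := by
        intro i
        apply Finset.sum_eq_zero
        intro j hj
        rw [hx1]
        have h2 := hSsub i j hj
        have : (j : ℕ) ≠ m := by omega
        simp [this]
      simp [hL, h1, h0]
    · have hk0 : 0 < Nat.sqrt (d - m - 1) := i.pos
      have hkne : ((Nat.sqrt (d - m - 1)):ℝ) ≠ 0 := Nat.cast_ne_zero.mpr hk0.ne'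
      have h0 : v i km = 0 := by
        rw [hv i km (le_refl m)]
        simp [hkmS i]
      have hsum : ∀ i', ∑ j ∈ S i', v i j = if i' = i then ((Nat.sqrt (d - m - 1)):ℝ) else 0 := by
        intro i'
        by_cases h : i' = i
        · rw [if_pos h, h]
          have h1 : ∀ j ∈ S i, v i j = 1 := by
            intro j hj
            rw [hv i j (by have := hSsub i j hj; omega)]
            simp [hj]
          rw [Finset.sum_congr rfl h1, Finset.sum_const, hScard i]
          simp
        · rw [if_neg h]
          apply Finset.sum_eq_zero
          intro j hj
          rw [hv i j (by have := hSsub i' j hj; omega)]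
          have : j ∉ S i := Finset.disjoint_left.mp (hSdisj i' i h) hj
          simp [this]
      simp only [Set.mem_setOf_eq, hL]
      rw [h0, zero_add]
      rw [Finset.sum_congr rfl fun i' _ => hsum i']
      rw [Finset.sum_ite_eq' Finset.univ i fun _ => ((Nat.sqrt (d - m - 1)):ℝ)]
      simp [Finset.mem_univ]
      field_simp
  have hLx : L x = 1 := convexHull_min hsubset hLconv hx
  have hnormsq : ‖x - xstar‖ ^ 2 = ∑ j, (x j - xstar j) ^ 2 := by
    rw [EuclideanSpace.norm_eq, Real.sq_sqrt (by positivity)]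
    congr 1
    ext j
    simp [Real.norm_eq_abs, sq_abs]
  set T : Finset (Fin d) := insert km (Finset.univ.biUnion S) with hT
  have hkmnot : km ∉ Finset.univ.biUnion S := by
    simp only [Finset.mem_biUnion]
    rintro ⟨i, -, h⟩
    exact hkmS i h
  have hxstar0 : ∀ j ∈ T, xstar j = 0 := by
    intro j hj
    rw [hxstar]
    rcases Finset.mem_insert.mp hj with rfl | hj
    · simp [hkm]
    · rcases Finset.mem_biUnion.mp hj with ⟨i, -, hji⟩
      have := hSsub i j hji
      have : ¬ ((j : ℕ) < m) := by omega
      simp [this]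
  have hTle : ∑ j ∈ T, (x j) ^ 2 ≤ ∑ j, (x j - xstar j) ^ 2 := by
    calc ∑ j ∈ T, (x j) ^ 2 = ∑ j ∈ T, (x j - xstar j) ^ 2 := by
          apply Finset.sum_congr rfl
          intro j hj
          rw [hxstar0 j hj, sub_zero]
      _ ≤ ∑ j, (x j - xstar j) ^ 2 :=
          Finset.sum_le_sum_of_subset_of_nonneg (Finset.subset_univ T)
            (fun j _ _ => sq_nonneg _)
  have hTsplit : ∑ j ∈ T, (x j) ^ 2
      = (x km) ^ 2 + ∑ i, ∑ j ∈ S i, (x j) ^ 2 := by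
    rw [hT, Finset.sum_insert hkmnot, Finset.sum_biUnion]
    intro i _ i' _ hne
    exact hSdisj i i' hne
  set a : ℝ := x km with ha
  set B : ℝ := ∑ i, ∑ j ∈ S i, x j with hB
  set Q : ℝ := ∑ i, ∑ j ∈ S i, (x j) ^ 2 with hQ
  have hQnonneg : 0 ≤ Q := Finset.sum_nonneg fun i _ =>
    Finset.sum_nonneg fun j _ => sq_nonneg _
  have hLx' : a + (1/((Nat.sqrt (d - m - 1)):ℝ)) * B = 1 := hLx
  have hBQ : B ^ 2 ≤ ((Nat.sqrt (d - m - 1)):ℝ) ^ 2 * Q := by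
    have h1 : ∀ i, (∑ j ∈ S i, x j) ^ 2 ≤ ((Nat.sqrt (d - m - 1)):ℝ) * ∑ j ∈ S i, (x j) ^ 2 := by
      intro i
      have := sq_sum_le_card_mul_sum_sq (s := S i) (f := fun j => x j)
      rwa [hScard i] at this
    have h2 : B ^ 2 ≤ ((Nat.sqrt (d - m - 1)):ℝ) * ∑ i, (∑ j ∈ S i, x j) ^ 2 := by
      have := sq_sum_le_card_mul_sum_sq (s := (Finset.univ : Finset (Fin (Nat.sqrt (d - m - 1)))))
        (f := fun i => ∑ j ∈ S i, x j)
      simpa [hB] using this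
    calc B ^ 2 ≤ ((Nat.sqrt (d - m - 1)):ℝ) * ∑ i, (∑ j ∈ S i, x j) ^ 2 := h2
      _ ≤ ((Nat.sqrt (d - m - 1)):ℝ) * (((Nat.sqrt (d - m - 1)):ℝ) * Q) := by
          apply mul_le_mul_of_nonneg_left _ (by positivity)
          rw [hQ, Finset.mul_sum]
          exact Finset.sum_le_sum fun i _ => h1 i
      _ = ((Nat.sqrt (d - m - 1)):ℝ) ^ 2 * Q := by ring
  have key : (1 : ℝ) / 2 ≤ a ^ 2 + Q := by
    rcases Nat.eq_zero_or_pos (Nat.sqrt (d - m - 1)) with hk0 | hk0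
    · have hB0 : B = 0 := by
        rw [hB]
        apply Finset.sum_eq_zero
        intro i _
        exact absurd i.pos (by omega)
      rw [hB0, mul_zero, add_zero] at hLx'
      nlinarith
    · have hkpos : (0:ℝ) < ((Nat.sqrt (d - m - 1)):ℝ) := by exact_mod_cast hk0
      have hkne : ((Nat.sqrt (d - m - 1)):ℝ) ≠ 0 := ne_of_gt hkpos
      have hBa : B = ((Nat.sqrt (d - m - 1)):ℝ) * (1 - a) := by field_simp at hLx'; linarith
      have h3 : (1 - a) ^ 2 ≤ Q := by
        have hk2 : (0:ℝ) < ((Nat.sqrt (d - m - 1)):ℝ) ^ 2 := by positivity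
        have h4 : ((Nat.sqrt (d - m - 1)):ℝ) ^ 2 * (1 - a) ^ 2 ≤ ((Nat.sqrt (d - m - 1)):ℝ) ^ 2 * Q := by
          calc ((Nat.sqrt (d - m - 1)):ℝ)^2 * (1-a)^2 = B^2 := by rw [hBa]; ring
            _ ≤ _ := hBQ
        exact le_of_mul_le_mul_left h4 hk2
      nlinarith [sq_nonneg (2*a - 1)]
  have hfin : (1:ℝ)/2 ≤ ‖x - xstar‖ ^ 2 := by
    rw [hnormsq]
    calc (1:ℝ)/2 ≤ a^2 + Q := key
      _ = ∑ j ∈ T, (x j)^2 := by rw [hTsplit]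
      _ ≤ _ := hTle
  linarith
end

section
/- Let K ⊆ ℝ^d be a convex compact polytope with vertex set V, let F* ⊆ K be convex, and let x = ∑_{i=1}^k λ_i v_i with v_i ∈ V, λ_i ≥ 0, ∑λ_i = 1. Suppose a point x* ∈ K can be written as x* = ∑_{i=1}^k (λ_i − Δ*_i) v_i + (∑_{i=1}^k Δ*_i) z with Δ*_i ∈ [0,λ_i], z ∈ F*, x* ∈ F*, and ∑_{i=1}^k Δ*_i ≤ R for some R ≤ 1. Then x* can also be written as x* = ∑_{i=1}^k (λ_i − Δ̄_i) v_i + (∑_{i=1}^k Δ̄_i) z̄ with Δ̄_i ∈ [0,λ_i], z̄ ∈ F*, and ∑_{i=1}^k Δ̄_i = R exactly. -/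
open scoped BigOperators

/-- the amount of weight moved onto `F*` in the vertex
decomposition can be taken to be exactly `R` (Observation 1 of the paper). -/
theorem fw_nep_exact_weight_decomposition {d : ℕ}
    (V : Set (EuclideanSpace ℝ (Fin d))) (hVfin : V.Finite)
    (K : Set (EuclideanSpace ℝ (Fin d))) (hK : K = convexHull ℝ V)
    (Fstar : Set (EuclideanSpace ℝ (Fin d)))
    (hFK : Fstar ⊆ K) (hFconv : Convex ℝ Fstar)
    (k : ℕ) (vv : Fin k → EuclideanSpace ℝ (Fin d)) (lam : Fin k → ℝ)
    (hvvV : ∀ i, vv i ∈ V) (hlam0 : ∀ i, 0 ≤ lam i) (hlam1 : ∑ i, lam i = 1)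
    (x : EuclideanSpace ℝ (Fin d)) (hx : x = ∑ i, lam i • vv i)
    (R : ℝ) (hR : R ≤ 1)
    (xstar : EuclideanSpace ℝ (Fin d)) (hxstarF : xstar ∈ Fstar)
    (Δ : Fin k → ℝ) (hΔ : ∀ i, Δ i ∈ Set.Icc 0 (lam i)) (hΔsum : ∑ i, Δ i ≤ R)
    (z : EuclideanSpace ℝ (Fin d)) (hz : z ∈ Fstar)
    (hdecomp : xstar = ∑ i, (lam i - Δ i) • vv i + (∑ i, Δ i) • z) :
    ∃ Δbar : Fin k → ℝ, ∃ zbar ∈ Fstar,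
      (∀ i, Δbar i ∈ Set.Icc 0 (lam i)) ∧ (∑ i, Δbar i = R) ∧
      xstar = ∑ i, (lam i - Δbar i) • vv i + (∑ i, Δbar i) • zbar := by

  set R' := ∑ i, Δ i with hR'
  rcases eq_or_lt_of_le hΔsum with heq | hlt
  · exact ⟨Δ, z, hz, hΔ, heq, hdecomp⟩
  · have hR'0 : 0 ≤ R' := Finset.sum_nonneg fun i _ => (hΔ i).1
    have hR'lt1 : R' < 1 := lt_of_lt_of_le hlt hR
    have hden : 0 < 1 - R' := by linarith
    have hRpos : 0 < R := lt_of_le_of_lt hR'0 hlt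
    set γ : ℝ := (R - R') / (1 - R') with hγ
    have hγ0 : 0 < γ := div_pos (by linarith) hden
    have hγ1 : γ ≤ 1 := (div_le_one hden).mpr (by linarith)
    have hkey : (1 - γ) * R' + γ = R := by
      field_simp [hγ]
      have hγm : γ * (1 - R') = R - R' := div_mul_cancel₀ _ hden.ne'
      linarith
    have h1γ : 0 ≤ 1 - γ := by linarith
    refine ⟨fun i => (1 - γ) * Δ i + γ * lam i,
      ((1 - γ) * R' / R) • z + (γ / R) • xstar, ?_, ?_, ?_, ?_⟩
    · refine hFconv hz hxstarF (div_nonneg (mul_nonneg h1γ hR'0) hRpos.le)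
        (div_nonneg hγ0.le hRpos.le) ?_
      rw [← add_div, hkey, div_self hRpos.ne']
    · intro i
      have h1 := (hΔ i).1
      have h2 := (hΔ i).2
      have hl := hlam0 i
      constructor
      · simp only []
        nlinarith [mul_nonneg h1γ h1, mul_nonneg hγ0.le hl]
      · simp only []
        nlinarith [mul_nonneg h1γ (sub_nonneg.mpr h2)]
    · rw [Finset.sum_add_distrib, ← Finset.mul_sum, ← Finset.mul_sum, ← hR', hlam1,
        mul_one, hkey]
    · have hsum : (∑ i, ((1 - γ) * Δ i + γ * lam i)) = R := by
        rw [Finset.sum_add_distrib, ← Finset.mul_sum, ← Finset.mul_sum, ← hR', hlam1,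
          mul_one, hkey]
      rw [hsum]
      have hS : ∑ i, (lam i - ((1 - γ) * Δ i + γ * lam i)) • vv i
          = (1 - γ) • ∑ i, (lam i - Δ i) • vv i := by
        rw [Finset.smul_sum]
        refine Finset.sum_congr rfl fun i _ => ?_
        rw [smul_smul]
        congr 1
        ring
      have hRz : R • (((1 - γ) * R' / R) • z + (γ / R) • xstar)
          = ((1 - γ) * R') • z + γ • xstar := by
        rw [smul_add, smul_smul, smul_smul, mul_div_cancel₀ _ hRpos.ne',
          mul_div_cancel₀ _ hRpos.ne']
      rw [hS, hRz, hdecomp]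
      module
end

section
/- Suppose f satisfies quadratic growth with parameter α > 0 w.r.t. K. Let C ≥ f(x_1) − f* and M ≥ max{ (β/α)(4 + 8dμ²D_{F*}²), 1/2 } for some μ > 0. Consider sequences generated as follows: x_1 ∈ V; at each step t ≥ 1, x_t = ∑_{i=1}^{k_t} λ_i v_i is a convex combination of vertices v_i ∈ V, v_{k_t+1} ∈ argmin_{u∈V} ( uᵀ∇f(x_t) + βρ_t‖u − x_t‖² ) with ρ_t = min{ √( (2Cdμ²/α)·exp(−(t−1)/(4M)) ), 1 } / (2M), and x_{t+1} minimizes either x ↦ xᵀ∇f(x_t) + (β/2)‖x − x_t‖² or f itself over conv(v_1,…,v_{k_t+1}). Assume additionally that for every t, letting x_t* ∈ X* be the point of X* closest to x_t, there exist Δ*_i ∈ [0,λ_i] and z ∈ F* such that x_t* = ∑_{i=1}^{k_t} (λ_i − Δ*_i)v_i + (∑Δ*_i)z and ∑_{i=1}^{k_t} Δ*_i ≤ min{ √d·μ·‖x_t − x_t*‖, 1 }. Then for all t ≥ 1: f(x_t) − f* ≤ C·exp(−(t−1)/(4M)). -/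
open scoped RealInnerProductSpace BigOperators
open Metric

section FwAux

variable {E : Type*} [NormedAddCommGroup E] [InnerProductSpace ℝ E] [CompleteSpace E]
  (f : E → ℝ) (g : E → E)

private lemma fw_line_hasDerivAt (hgrad : ∀ y, HasGradientAt f (g y) y) (p v : E) (τ : ℝ) :
    HasDerivAt (fun s : ℝ => f (p + s • v)) ⟪g (p + τ • v), v⟫ τ := by
  have h1 : HasDerivAt (fun s : ℝ => p + s • v) v τ := by
    simpa using ((hasDerivAt_id τ).smul_const v).const_add p
  have h2 := (hgrad (p + τ • v)).hasFDerivAt.comp_hasDerivAt τ h1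
  simpa [InnerProductSpace.toDual_apply_apply, Function.comp_def] using h2

private lemma fw_descent_lemma (hgrad : ∀ y, HasGradientAt f (g y) y) {β : ℝ}
    (hsmooth : ∀ y z, ‖g y - g z‖ ≤ β * ‖y - z‖) (p q : E) :
    f q ≤ f p + ⟪g p, q - p⟫ + β / 2 * ‖q - p‖ ^ 2 := by
  set v := q - p with hv
  set φ : ℝ → ℝ := fun s => f (p + s • v) - s * ⟪g p, v⟫ - β / 2 * s ^ 2 * ‖v‖ ^ 2 with hφ
  have hd : ∀ s : ℝ, HasDerivAt φ
      (⟪g (p + s • v), v⟫ - ⟪g p, v⟫ - β * s * ‖v‖ ^ 2) s := by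
    intro s
    have h1 := fw_line_hasDerivAt f g hgrad p v s
    have h2 : HasDerivAt (fun s : ℝ => s * ⟪g p, v⟫) ⟪g p, v⟫ s := by
      simpa using (hasDerivAt_id s).mul_const ⟪g p, v⟫
    have h3 : HasDerivAt (fun s : ℝ => β / 2 * s ^ 2 * ‖v‖ ^ 2)
        (β * s * ‖v‖ ^ 2) s := by
      have := ((hasDerivAt_pow 2 s).const_mul (β / 2)).mul_const (‖v‖ ^ 2)
      convert this using 1
      · rfl
      · rfl
      ring
    exact (h1.sub h2).sub h3
  have hmono : AntitoneOn φ (Set.Icc 0 1) := by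
    apply antitoneOn_of_deriv_nonpos (convex_Icc 0 1)
    · exact fun s _ => ((hd s).continuousAt).continuousWithinAt
    · intro s _
      exact ((hd s).differentiableAt).differentiableWithinAt
    · intro s hs
      rw [interior_Icc] at hs
      rw [(hd s).deriv]
      have hip : ⟪g (p + s • v) - g p, v⟫ ≤ ‖g (p + s • v) - g p‖ * ‖v‖ :=
        real_inner_le_norm _ _
      have hn : ‖g (p + s • v) - g p‖ ≤ β * (s * ‖v‖) := by
        have := hsmooth (p + s • v) p
        simpa [norm_smul, abs_of_nonneg hs.1.le] using this
      have h4 : ⟪g (p + s • v) - g p, v⟫ ≤ β * s * ‖v‖ ^ 2 := by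
        calc ⟪g (p + s • v) - g p, v⟫ ≤ ‖g (p + s • v) - g p‖ * ‖v‖ := hip
        _ ≤ β * (s * ‖v‖) * ‖v‖ := by
            apply mul_le_mul_of_nonneg_right hn (norm_nonneg _)
        _ = β * s * ‖v‖ ^ 2 := by ring
      have h5 := inner_sub_left (𝕜 := ℝ) (g (p + s • v)) (g p) v
      rw [h5] at h4
      linarith
  have h01 := hmono (Set.mem_Icc.2 ⟨le_refl 0, zero_le_one⟩)
      (Set.mem_Icc.2 ⟨zero_le_one, le_refl 1⟩) zero_le_one
  have e0 : φ 0 = f p := by simp [hφ]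
  have e1 : φ 1 = f q - ⟪g p, v⟫ - β / 2 * ‖v‖ ^ 2 := by
    simp [hφ, hv]
  rw [e0, e1] at h01
  linarith

private lemma fw_convex_grad_le (hfconv : ConvexOn ℝ Set.univ f)
    (hgrad : ∀ y, HasGradientAt f (g y) y) (p q : E) :
    f p + ⟪g p, q - p⟫ ≤ f q := by
  set v := q - p with hv
  set φ : ℝ → ℝ := fun s => f (p + s • v) with hφ
  have hd : HasDerivAt φ ⟪g p, v⟫ 0 := by
    have := fw_line_hasDerivAt f g hgrad p v 0
    simpa using this
  have hslope := hasDerivAt_iff_tendsto_slope.1 hd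
  have hmono : Filter.Tendsto (slope φ 0) (nhdsWithin 0 (Set.Ioi 0)) (nhds ⟪g p, v⟫) :=
    hslope.mono_left (nhdsWithin_mono 0 (fun x hx => ne_of_gt hx))
  have hbound : ∀ᶠ s in nhdsWithin 0 (Set.Ioi 0), slope φ 0 s ≤ f q - f p := by
    filter_upwards [Ioc_mem_nhdsGT_of_mem (Set.left_mem_Ico.2 zero_lt_one)] with s hs
    have hs0 : (0:ℝ) < s := hs.1
    have hs1 : s ≤ 1 := hs.2
    have hcvx : φ s ≤ (1 - s) * f p + s * f q := by
      have hpt : p + s • v = (1 - s) • p + s • q := by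
        rw [hv]; module
      have := hfconv.2 (Set.mem_univ p) (Set.mem_univ q)
        (by linarith : (0:ℝ) ≤ 1 - s) hs0.le (by ring)
      rw [hφ]; simp only []
      rw [hpt]
      simpa [smul_eq_mul] using this
    have e0 : φ 0 = f p := by simp [hφ]
    have hnum : φ s - φ 0 ≤ s * (f q - f p) := by rw [e0]; nlinarith [hcvx]
    rw [slope_def_field, div_le_iff₀ (by linarith : (0:ℝ) < s - 0)]
    nlinarith [hnum]
  have := le_of_tendsto hmono hbound
  linarith

end FwAux

private lemma fw_sq_le {a b : ℝ} (ha : 0 ≤ a) (hb : 0 ≤ b) (h : a ^ 2 ≤ b ^ 2) : a ≤ b := by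
  nlinarith

/-- The scaled core inequality. -/
private lemma fw_core_scaled (Δ m κ R S : ℝ) (h0 : 0 ≤ Δ) (hR : Δ ≤ R) (hm : Δ ≤ m)
    (hm1 : m ≤ 1) (hmκ : m ≤ κ) (hRκ : R ≤ κ) :
    Δ*m*(S+R)^2 + ((1-Δ)*R + Δ*S)^2 ≤ 2*κ^2 + 4*κ^2*S^2 := by
  have hΔ1 : Δ ≤ 1 := hm.trans hm1
  have hm0 : 0 ≤ m := h0.trans hm
  have hκ0 : 0 ≤ κ := hm0.trans hmκ
  have c1 : 0 ≤ Δ * (2*m*S - R)^2 := mul_nonneg h0 (sq_nonneg _)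
  have c2 : 0 ≤ (1-Δ) * (2*Δ*S - R)^2 := mul_nonneg (by linarith) (sq_nonneg _)
  have hTS : Δ*m*S^2 + Δ^2*S^2 + 2*Δ*m^2*S^2 + 2*Δ^2*(1-Δ)*S^2 ≤ 4*m^2*S^2 := by
    nlinarith [sq_nonneg S, mul_nonneg (mul_nonneg (sub_nonneg.2 hm) hm0) (sq_nonneg S),
      mul_nonneg (mul_nonneg (sub_nonneg.2 hm) h0) (sq_nonneg S),
      mul_nonneg (mul_nonneg (sub_nonneg.2 hm1) (mul_nonneg h0 hm0)) (sq_nonneg S),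
      mul_nonneg (mul_nonneg (mul_nonneg (sub_nonneg.2 hΔ1) (sub_nonneg.2 hm)) h0) (sq_nonneg S)]
  have hm2 : m^2 ≤ κ^2 := by nlinarith
  have hR2 : R^2 ≤ κ^2 := by nlinarith [hR.trans hRκ, h0.trans (hR.trans hRκ)]
  have hTR : (Δ*m + (1-Δ)^2 + 1/2) * R^2 ≤ (3/2) * κ^2 := by
    nlinarith [mul_nonneg (mul_nonneg h0 (sub_nonneg.2 hΔ1)) (sq_nonneg R),
      mul_nonneg (mul_nonneg h0 (sub_nonneg.2 hm1)) (sq_nonneg R), sq_nonneg R]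
  nlinarith [c1, c2, hTS, hTR, sq_nonneg S]

/-- The unscaled core inequality. -/
private lemma fw_core (Δ m ν A r D : ℝ) (h0 : 0 ≤ Δ) (hΔνr : Δ ≤ ν*r) (hΔm : Δ ≤ m)
    (hm1 : m ≤ 1) (hm2 : m^2 ≤ ν^2*A) (hr2 : r^2 ≤ A) (hr0 : 0 ≤ r) (hD0 : 0 ≤ D)
    (hν0 : 0 ≤ ν) :
    Δ*m*(D+r)^2 + ((1-Δ)*r + Δ*D)^2 ≤ 2*A + 4*ν^2*A*D^2 := by
  have hA0 : 0 ≤ A := (sq_nonneg r).trans hr2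
  rcases eq_or_lt_of_le hν0 with hν | hν
  · -- ν = 0 forces Δ = 0
    have hΔ0 : Δ = 0 := le_antisymm (by nlinarith) h0
    subst hΔ0
    nlinarith [sq_nonneg (ν*D)]
  · set κ := Real.sqrt (ν^2*A) with hκdef
    have hκ0 : 0 ≤ κ := Real.sqrt_nonneg _
    have hκsq : κ^2 = ν^2*A := Real.sq_sqrt (by positivity)
    have hm0 : 0 ≤ m := h0.trans hΔm
    have hmκ : m ≤ κ := fw_sq_le hm0 hκ0 (by rw [hκsq]; exact hm2)
    have hRκ : ν*r ≤ κ := fw_sq_le (by positivity) hκ0 (by rw [hκsq]; nlinarith)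
    have hsc := fw_core_scaled Δ m κ (ν*r) (ν*D) h0 hΔνr hΔm hm1 hmκ hRκ
    rw [hκsq] at hsc
    have hν2 : 0 < ν^2 := by positivity
    nlinarith [hsc, mul_pos hν2 hν2]

private lemma fw_SL1 {Δs m c1 W DF r : ℝ} (h0 : 0 ≤ Δs) (hm : Δs ≤ m) (hW : 0 ≤ W) :
    Δs * m * ((DF+r)^2 - W^2) + 1/2 * (c1 + Δs*W)^2 ≤ Δs * m * (DF+r)^2 + c1^2 := by
  nlinarith [sq_nonneg (c1 - Δs*W),
    mul_nonneg (mul_nonneg h0 (sub_nonneg.2 hm)) (sq_nonneg W)]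

set_option maxHeartbeats 1000000 in
/-- linear convergence of the NEP oracle-based fully-corrective
Frank-Wolfe variant for polytopes under quadratic growth (Theorem 3). -/
theorem fw_nep_polytope_linear_rate {d : ℕ}
    (V : Set (EuclideanSpace ℝ (Fin d))) (hVfin : V.Finite)
    (K : Set (EuclideanSpace ℝ (Fin d))) (hK : K = convexHull ℝ V)
    (hVext : V = K.extremePoints ℝ)
    (f : EuclideanSpace ℝ (Fin d) → ℝ)
    (g : EuclideanSpace ℝ (Fin d) → EuclideanSpace ℝ (Fin d))
    (hfconv : ConvexOn ℝ Set.univ f)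
    (hgrad : ∀ y, HasGradientAt f (g y) y)
    (β : ℝ) (hβ : 0 < β)
    (hsmooth : ∀ y z, ‖g y - g z‖ ≤ β * ‖y - z‖)
    (fstar : ℝ) (hfstar : ∀ y ∈ K, fstar ≤ f y)
    (Xstar : Set (EuclideanSpace ℝ (Fin d)))
    (hXstar : Xstar = {y | y ∈ K ∧ f y = fstar}) (hXne : Xstar.Nonempty)
    -- quadratic growth
    (α : ℝ) (hα : 0 < α)
    (hQG : ∀ y ∈ K, infDist y Xstar ^ 2 ≤ 2 / α * (f y - fstar))
    -- the set F*
    (Fstar : Set (EuclideanSpace ℝ (Fin d)))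
    (hFK : Fstar ⊆ K) (hFconv : Convex ℝ Fstar) (hXF : Xstar ⊆ Fstar)
    (hFvert : ∀ y ∈ Fstar, y ∈ convexHull ℝ (V ∩ Fstar))
    (DF : ℝ) (hDF : ∀ u ∈ Fstar, ∀ w ∈ Fstar, ‖u - w‖ ≤ DF)
    -- constants
    (μ C M : ℝ) (hμ : 0 < μ)
    (hM : max (β / α * (4 + 8 * d * μ ^ 2 * DF ^ 2)) (1 / 2) ≤ M)
    -- step-size parameters
    (ρ : ℕ → ℝ)
    (hρ : ∀ t : ℕ, 1 ≤ t → ρ t =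
      min (Real.sqrt (2 * C * d * μ ^ 2 / α * Real.exp (-(((t : ℝ) - 1) / (4 * M))))) 1
        / (2 * M))
    -- the iterates and their vertex decompositions
    (x : ℕ → EuclideanSpace ℝ (Fin d))
    (k : ℕ → ℕ) (vv : ∀ t : ℕ, Fin (k t) → EuclideanSpace ℝ (Fin d))
    (lam : ∀ t : ℕ, Fin (k t) → ℝ) (w : ℕ → EuclideanSpace ℝ (Fin d))
    (hx1 : x 1 ∈ V) (hC : f (x 1) - fstar ≤ C)
    (hvvV : ∀ t, 1 ≤ t → ∀ i, vv t i ∈ V)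
    (hlam0 : ∀ t, 1 ≤ t → ∀ i, 0 ≤ lam t i)
    (hlam1 : ∀ t, 1 ≤ t → ∑ i, lam t i = 1)
    (hxdecomp : ∀ t, 1 ≤ t → x t = ∑ i, lam t i • vv t i)
    (hwV : ∀ t, 1 ≤ t → w t ∈ V)
    (hwopt : ∀ t, 1 ≤ t → ∀ u ∈ V,
      ⟪g (x t), w t⟫ + β * ρ t * ‖w t - x t‖ ^ 2
        ≤ ⟪g (x t), u⟫ + β * ρ t * ‖u - x t‖ ^ 2)
    (hstep : ∀ t, 1 ≤ t →
      (x (t + 1) ∈ convexHull ℝ (insert (w t) (Set.range (vv t))) ∧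
        ∀ y ∈ convexHull ℝ (insert (w t) (Set.range (vv t))),
          ⟪g (x t), x (t + 1)⟫ + β / 2 * ‖x (t + 1) - x t‖ ^ 2
            ≤ ⟪g (x t), y⟫ + β / 2 * ‖y - x t‖ ^ 2) ∨
      (x (t + 1) ∈ convexHull ℝ (insert (w t) (Set.range (vv t))) ∧
        ∀ y ∈ convexHull ℝ (insert (w t) (Set.range (vv t))), f (x (t + 1)) ≤ f y))
    -- the vertex-decomposition property relative to the closest optimal point
    (hclose : ∀ t, 1 ≤ t → ∀ xst ∈ Xstar, (∀ y ∈ Xstar, ‖x t - xst‖ ≤ ‖x t - y‖) →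
      ∃ Δ : Fin (k t) → ℝ, ∃ z ∈ Fstar,
        (∀ i, Δ i ∈ Set.Icc 0 (lam t i)) ∧
        xst = ∑ i, (lam t i - Δ i) • vv t i + (∑ i, Δ i) • z ∧
        ∑ i, Δ i ≤ min (Real.sqrt d * μ * ‖x t - xst‖) 1) :
    ∀ t : ℕ, 1 ≤ t →
      f (x t) - fstar ≤ C * Real.exp (-(((t : ℝ) - 1) / (4 * M))) := by
  have hM2 : (1:ℝ)/2 ≤ M := le_trans (le_max_right _ _) hM
  have hMpos : (0:ℝ) < M := by linarith
  have hMuv : β / α * (4 + 8 * d * μ ^ 2 * DF ^ 2) ≤ M := le_trans (le_max_left _ _) hM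
  have hx1K : x 1 ∈ K := by rw [hK]; exact subset_convexHull ℝ V hx1
  have hC0 : 0 ≤ C := le_trans (by linarith [hfstar (x 1) hx1K]) hC
  have hKcompact : IsCompact K := by rw [hK]; exact hVfin.isCompact_convexHull ℝ
  have hfcont : Continuous f :=
    continuous_iff_continuousAt.2 fun y => (hgrad y).differentiableAt.continuousAt
  have hXcpt : IsCompact Xstar := by
    have hXeq : Xstar = K ∩ {y | f y = fstar} := by rw [hXstar]; rfl
    rw [hXeq]
    exact hKcompact.inter_right (isClosed_eq hfcont continuous_const)
  intro t ht
  induction t, ht using Nat.le_induction with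
  | base =>
    simpa using hC
  | succ t ht ih =>
    -- abbreviations that will be used throughout
    have hE0 : (0:ℝ) < Real.exp (-(((t : ℝ) - 1) / (4 * M))) := Real.exp_pos _
    set E := Real.exp (-(((t : ℝ) - 1) / (4 * M))) with hE
    set Kt := C * E with hKt
    have hKt0 : 0 ≤ Kt := mul_nonneg hC0 hE0.le
    have hxtK : x t ∈ K := by
      rw [hK, hxdecomp t ht]
      exact Convex.sum_mem (convex_convexHull ℝ V) (fun i _ => hlam0 t ht i)
        (hlam1 t ht) (fun i _ => subset_convexHull ℝ V (hvvV t ht i))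
    have hh0 : 0 ≤ f (x t) - fstar := by linarith [hfstar (x t) hxtK]
    obtain ⟨xs, hxsX, hxsd⟩ := hXcpt.exists_infDist_eq_dist hXne (x t)
    have hclosest : ∀ y ∈ Xstar, ‖x t - xs‖ ≤ ‖x t - y‖ := by
      intro y hy
      rw [← dist_eq_norm, ← dist_eq_norm, ← hxsd]
      exact infDist_le_dist_of_mem hy
    obtain ⟨Δ, z, hzF, hΔmem, hxs_eq, hΔsum⟩ := hclose t ht xs hxsX hclosest
    set r := ‖x t - xs‖ with hr
    set Δs := ∑ i, Δ i with hΔs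
    set W := ‖w t - x t‖ with hW
    set ν := Real.sqrt d * μ with hν
    have hν0 : 0 ≤ ν := mul_nonneg (Real.sqrt_nonneg _) hμ.le
    have hr0 : 0 ≤ r := norm_nonneg _
    have hW0 : 0 ≤ W := norm_nonneg _
    have hΔs0 : 0 ≤ Δs := Finset.sum_nonneg fun i _ => (Set.mem_Icc.1 (hΔmem i)).1
    have hΔs1 : Δs ≤ 1 := le_trans hΔsum (min_le_right _ _)
    have hΔsνr : Δs ≤ ν * r := le_trans hΔsum (min_le_left _ _)
    have hxsP : xs ∈ K ∧ f xs = fstar := by rw [hXstar] at hxsX; exact hxsX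
    have hxsF : xs ∈ Fstar := hXF hxsX
    set h := f (x t) - fstar with hh
    have hhK : h ≤ Kt := ih
    have hr2 : r ^ 2 ≤ 2 / α * h := by
      have hq := hQG (x t) hxtK
      rw [hxsd, dist_eq_norm] at hq
      exact hq
    set A := 2 / α * Kt with hA
    have hrA : r ^ 2 ≤ A := by
      have h2α : (0:ℝ) ≤ 2/α := by positivity
      calc r^2 ≤ 2/α * h := hr2
        _ ≤ A := by rw [hA]; exact mul_le_mul_of_nonneg_left hhK h2α
    -- the step-size parameters
    set κ := Real.sqrt (2 * C * d * μ ^ 2 / α * E) with hκ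
    have hκ0 : 0 ≤ κ := Real.sqrt_nonneg _
    have hκsq : κ ^ 2 = 2 * C * d * μ ^ 2 / α * E := Real.sq_sqrt (by positivity)
    have hνA : ν ^ 2 * A = κ ^ 2 := by
      rw [hκsq, hν, hA, hKt, mul_pow, Real.sq_sqrt (Nat.cast_nonneg d)]
      field_simp
    set m := min κ 1 with hm
    have hm1 : m ≤ 1 := min_le_right _ _
    have hm0 : 0 ≤ m := le_min hκ0 zero_le_one
    have hρt : ρ t = m / (2 * M) := by rw [hm, hκ, hE]; exact hρ t ht
    set s := 1 / (2 * M) with hs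
    have hs0 : (0:ℝ) < s := by rw [hs]; positivity
    have hs1 : s ≤ 1 := by rw [hs, div_le_one (by linarith)]; linarith
    have hρs : ρ t = m * s := by rw [hρt, hs]; ring
    have hρ0 : 0 ≤ ρ t := by rw [hρs]; exact mul_nonneg hm0 hs0.le
    have hνrκ : ν * r ≤ κ := by
      apply fw_sq_le (mul_nonneg hν0 hr0) hκ0
      calc (ν*r)^2 = ν^2 * r^2 := by ring
        _ ≤ ν^2 * A := mul_le_mul_of_nonneg_left hrA (sq_nonneg ν)
        _ = κ^2 := hνA
    have hΔsm : Δs ≤ m := by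
      refine le_trans hΔsum (le_min ?_ (min_le_right _ _))
      exact le_trans (min_le_left _ _) hνrκ
    have hm2A : m ^ 2 ≤ ν ^ 2 * A := by
      rw [hνA]
      exact pow_le_pow_left₀ hm0 (min_le_left κ 1) 2
    have hDF0 : 0 ≤ DF := le_trans (norm_nonneg (xs - xs)) (hDF xs hxsF xs hxsF)
    -- the oracle inequality transferred to z
    have horacle : ⟪g (x t), w t⟫ + β * ρ t * W ^ 2
        ≤ ⟪g (x t), z⟫ + β * ρ t * (DF + r) ^ 2 := by
      have hlin : IsLinearMap ℝ (fun u : EuclideanSpace ℝ (Fin d) => ⟪g (x t), u⟫) :=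
        ⟨fun a b => inner_add_right _ _ _, fun c a => real_inner_smul_right _ _ _⟩
      have hsub : V ∩ Fstar ⊆
          {u | ⟪g (x t), w t⟫ + β * ρ t * W ^ 2 - β * ρ t * (DF + r) ^ 2 ≤ ⟪g (x t), u⟫} := by
        rintro u ⟨huV, huF⟩
        have h1 := hwopt t ht u huV
        have hur : ‖u - x t‖ ≤ DF + r := by
          have e : u - x t = (u - xs) + (xs - x t) := by abel
          rw [e]
          refine le_trans (norm_add_le _ _) (add_le_add (hDF u huF xs hxsF) ?_)
          rw [norm_sub_rev, hr]
        have hsq : ‖u - x t‖ ^ 2 ≤ (DF + r) ^ 2 := pow_le_pow_left₀ (norm_nonneg _) hur 2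
        have h2 : β * ρ t * ‖u - x t‖ ^ 2 ≤ β * ρ t * (DF + r) ^ 2 :=
          mul_le_mul_of_nonneg_left hsq (mul_nonneg hβ.le hρ0)
        simp only [Set.mem_setOf_eq]
        linarith
      have hz2 := convexHull_min hsub (convex_halfSpace_ge hlin _) (hFvert z hzF)
      simp only [Set.mem_setOf_eq] at hz2
      linarith
    -- the vertex decomposition identity
    have hxt := hxdecomp t ht
    have hSv : ∑ i, Δ i • vv t i = (x t - xs) + Δs • z := by
      have h1 : ∑ i, (lam t i - Δ i) • vv t i
          = (∑ i, lam t i • vv t i) - ∑ i, Δ i • vv t i := by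
        rw [← Finset.sum_sub_distrib]
        exact Finset.sum_congr rfl fun i _ => sub_smul _ _ _
      have h2 := hxs_eq
      rw [h1, ← hxt] at h2
      rw [h2]
      abel
    -- the candidate point
    set T := convexHull ℝ (insert (w t) (Set.range (vv t))) with hT
    set yc := (∑ i, (lam t i - s * Δ i) • vv t i) + (s * Δs) • w t with hyc
    have hycT : yc ∈ T := by
      have hconv : Convex ℝ T := convex_convexHull ℝ _
      have hcoef0 : ∀ o ∈ (Finset.univ : Finset (Option (Fin (k t)))),
          0 ≤ Option.elim o (s * Δs) (fun i => lam t i - s * Δ i) := by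
        rintro (_|i) _
        · exact mul_nonneg hs0.le hΔs0
        · have hi1 := (Set.mem_Icc.1 (hΔmem i)).1
          have hi2 := (Set.mem_Icc.1 (hΔmem i)).2
          have hsd : s * Δ i ≤ 1 * Δ i := mul_le_mul_of_nonneg_right hs1 hi1
          rw [one_mul] at hsd
          simp only [Option.elim]
          linarith
      have hcoef1 : ∑ o : Option (Fin (k t)),
          Option.elim o (s * Δs) (fun i => lam t i - s * Δ i) = 1 := by
        rw [Fintype.sum_option]
        simp only [Option.elim]
        have he : ∑ i, (lam t i - s * Δ i) = 1 - s * Δs := by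
          rw [Finset.sum_sub_distrib, hlam1 t ht, ← Finset.mul_sum, ← hΔs]
        rw [he]
        ring
      have hpts : ∀ o ∈ (Finset.univ : Finset (Option (Fin (k t)))),
          Option.elim o (w t) (vv t) ∈ T := by
        rintro (_|i) _
        · exact subset_convexHull ℝ _ (Set.mem_insert _ _)
        · exact subset_convexHull ℝ _ (Set.mem_insert_of_mem _ ⟨i, rfl⟩)
      have hmem := hconv.sum_mem hcoef0 hcoef1 hpts
      rw [Fintype.sum_option] at hmem
      simp only [Option.elim] at hmem
      rw [hyc]
      convert hmem using 1
      abel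
    have hycx : yc - x t = s • ((xs - x t) + Δs • (w t - z)) := by
      have e : ∑ i, (lam t i - s * Δ i) • vv t i
          = (∑ i, lam t i • vv t i) - s • (∑ i, Δ i • vv t i) := by
        rw [Finset.smul_sum, ← Finset.sum_sub_distrib]
        exact Finset.sum_congr rfl fun i _ => by rw [sub_smul, smul_smul]
      have h1 : yc - x t = s • (Δs • (w t) - ∑ i, Δ i • vv t i) := by
        rw [hyc, hxt, e]
        module
      rw [h1, hSv]
      module
    -- norm estimate for the candidate step
    have hzxs : ‖z - xs‖ ≤ DF := hDF z hzF xs hxsF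
    set c1 := (1 - Δs) * r + Δs * DF with hc1
    have hc10 : 0 ≤ c1 := by
      have j1 : 0 ≤ (1-Δs)*r := mul_nonneg (by linarith) hr0
      have j2 : 0 ≤ Δs*DF := mul_nonneg hΔs0 hDF0
      rw [hc1]; linarith
    have hnorm : ‖yc - x t‖ ≤ s * (c1 + Δs * W) := by
      rw [hycx]
      have hdec : (xs - x t) + Δs • (w t - z)
          = ((1 - Δs) • (xs - x t) + Δs • (w t - x t)) - Δs • (z - xs) := by module
      rw [norm_smul, hdec]
      have e1 : ‖(1 - Δs) • (xs - x t)‖ = (1 - Δs) * r := by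
        rw [norm_smul, Real.norm_eq_abs, abs_of_nonneg (by linarith : (0:ℝ) ≤ 1 - Δs),
          norm_sub_rev, hr]
      have e2 : ‖Δs • (w t - x t)‖ = Δs * W := by
        rw [norm_smul, Real.norm_eq_abs, abs_of_nonneg hΔs0, hW]
      have e3 : ‖Δs • (z - xs)‖ ≤ Δs * DF := by
        rw [norm_smul, Real.norm_eq_abs, abs_of_nonneg hΔs0]
        exact mul_le_mul_of_nonneg_left hzxs hΔs0
      have htri : ‖((1 - Δs) • (xs - x t) + Δs • (w t - x t)) - Δs • (z - xs)‖
          ≤ (1 - Δs) * r + Δs * W + Δs * DF := by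
        refine le_trans (norm_sub_le _ _) ?_
        have := norm_add_le ((1 - Δs) • (xs - x t)) (Δs • (w t - x t))
        rw [e1, e2] at this
        linarith
      have hsabs : ‖s‖ = s := by rw [Real.norm_eq_abs, abs_of_nonneg hs0.le]
      rw [hsabs]
      have : c1 + Δs * W = (1 - Δs) * r + Δs * W + Δs * DF := by rw [hc1]; ring
      rw [this]
      exact mul_le_mul_of_nonneg_left htri hs0.le
    -- inner product estimates
    have hip : ⟪g (x t), yc - x t⟫
        = s * (⟪g (x t), xs - x t⟫ + Δs * ⟪g (x t), w t - z⟫) := by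
      rw [hycx, real_inner_smul_right, inner_add_right, real_inner_smul_right]
    have hip1 : ⟪g (x t), xs - x t⟫ ≤ -h := by
      have hcg := fw_convex_grad_le f g hfconv hgrad (x t) xs
      rw [hxsP.2] at hcg
      rw [hh]
      linarith
    have hip2 : ⟪g (x t), w t - z⟫ ≤ β * ρ t * ((DF + r)^2 - W^2) := by
      rw [inner_sub_right]
      linarith [horacle]
    -- master inequality applied to the candidate point
    have hmaster : f (x (t+1)) ≤ f (x t) + ⟪g (x t), yc - x t⟫ + β/2 * ‖yc - x t‖^2 := by
      rcases hstep t ht with ⟨hmem, hopt⟩ | ⟨hmem, hopt⟩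
      · have hd := fw_descent_lemma f g hgrad hsmooth (x t) (x (t+1))
        have ho := hopt yc (by rw [← hT]; exact hycT)
        have e1 : ⟪g (x t), x (t+1) - x t⟫ = ⟪g (x t), x (t+1)⟫ - ⟪g (x t), x t⟫ :=
          inner_sub_right _ _ _
        have e2 : ⟪g (x t), yc - x t⟫ = ⟪g (x t), yc⟫ - ⟪g (x t), x t⟫ :=
          inner_sub_right _ _ _
        rw [e1] at hd
        rw [e2]
        linarith
      · have hd := fw_descent_lemma f g hgrad hsmooth (x t) yc
        have ho := hopt yc (by rw [← hT]; exact hycT)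
        linarith
    -- assembling the scalar chain
    have hcΔW : (0:ℝ) ≤ c1 + Δs * W := by
      have := mul_nonneg hΔs0 hW0
      linarith
    have hq2 : β/2 * ‖yc - x t‖^2 ≤ β/2 * s^2 * (c1 + Δs*W)^2 := by
      have hsq : ‖yc - x t‖^2 ≤ (s * (c1 + Δs*W))^2 := pow_le_pow_left₀ (norm_nonneg _) hnorm 2
      calc β/2 * ‖yc - x t‖^2 ≤ β/2 * (s * (c1 + Δs*W))^2 :=
            mul_le_mul_of_nonneg_left hsq (by positivity)
        _ = β/2 * s^2 * (c1 + Δs*W)^2 := by ring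
    have hipbound : ⟪g (x t), yc - x t⟫
        ≤ s * (-h + Δs * (β * (m*s) * ((DF+r)^2 - W^2))) := by
      rw [hip]
      apply mul_le_mul_of_nonneg_left _ hs0.le
      have h3 : Δs * ⟪g (x t), w t - z⟫ ≤ Δs * (β * ρ t * ((DF+r)^2 - W^2)) :=
        mul_le_mul_of_nonneg_left hip2 hΔs0
      rw [hρs] at h3
      linarith
    clear_value E Kt h A κ m s r Δs W ν c1
    -- SL1 : kill the W terms
    have hSL1 : Δs * m * ((DF+r)^2 - W^2) + 1/2 * (c1 + Δs*W)^2
        ≤ Δs * m * (DF+r)^2 + c1^2 := fw_SL1 hΔs0 hΔsm hW0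
    have hchain : f (x (t+1)) - fstar
        ≤ (1 - s) * h + β * s^2 * (Δs * m * (DF+r)^2 + c1^2) := by
      have hmul : β * s^2 * (Δs * m * ((DF+r)^2 - W^2) + 1/2 * (c1 + Δs*W)^2)
          ≤ β * s^2 * (Δs * m * (DF+r)^2 + c1^2) :=
        mul_le_mul_of_nonneg_left hSL1 (by positivity)
      have hexp1 : s * (-h + Δs * (β * (m*s) * ((DF+r)^2 - W^2))) + β/2 * s^2 * (c1 + Δs*W)^2
          = -s*h + β * s^2 * (Δs * m * ((DF+r)^2 - W^2) + 1/2 * (c1 + Δs*W)^2) := by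
        ring
      have : f (x (t+1)) - fstar ≤ h + ⟪g (x t), yc - x t⟫ + β/2 * ‖yc - x t‖^2 := by
        rw [hh]
        linarith [hmaster]
      linarith only [this, hipbound, hq2, hmul, hexp1]
    -- the core geometric bound
    have hG := fw_core Δs m ν A r DF hΔs0 hΔsνr hΔsm hm1 hm2A hrA hr0 hDF0 hν0
    have hβG : β * (Δs * m * (DF+r)^2 + ((1-Δs)*r + Δs*DF)^2) ≤ M * Kt := by
      have h1 : β * (Δs*m*(DF+r)^2 + ((1-Δs)*r + Δs*DF)^2) ≤ β * (2*A + 4*ν^2*A*DF^2) :=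
        mul_le_mul_of_nonneg_left hG hβ.le
      have h2 : β * (2*A + 4*ν^2*A*DF^2) = β / α * (4 + 8 * d * μ^2 * DF^2) * Kt := by
        rw [hA, hν, mul_pow, Real.sq_sqrt (Nat.cast_nonneg d)]
        field_simp
        ring
      rw [h2] at h1
      exact le_trans h1 (mul_le_mul_of_nonneg_right hMuv hKt0)
    have hfinal1 : f (x (t+1)) - fstar ≤ (1 - s) * h + s^2 * (M * Kt) := by
      have e : β * s^2 * (Δs * m * (DF+r)^2 + c1^2)
          = s^2 * (β * (Δs * m * (DF+r)^2 + ((1-Δs)*r + Δs*DF)^2)) := by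
        rw [hc1]; ring
      have := mul_le_mul_of_nonneg_left hβG (sq_nonneg s)
      rw [← e] at this
      linarith [hchain]
    have hfinal2 : f (x (t+1)) - fstar ≤ (1 - 1/(4*M)) * Kt := by
      have hsM : s^2 * M = s/2 := by
        rw [hs]
        field_simp
      have h1 : (1-s)*h ≤ (1-s)*Kt := mul_le_mul_of_nonneg_left hhK (by linarith)
      have h2 : s/2 = 1/(4*M) := by rw [hs]; ring
      have h3 : s^2 * (M * Kt) = (s/2) * Kt := by rw [← hsM]; ring
      rw [h3, h2] at hfinal1
      have h4 : (1-s)*Kt + 1/(4*M)*Kt = (1 - 1/(4*M))*Kt := by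
        rw [← h2]; ring
      linarith only [hfinal1, h1, h4]
    have hexp : 1 - 1/(4*M) ≤ Real.exp (-(1/(4*M))) := by
      have := Real.add_one_le_exp (-(1/(4*M)))
      linarith
    have hfinal3 : f (x (t+1)) - fstar ≤ Kt * Real.exp (-(1/(4*M))) := by
      calc f (x (t+1)) - fstar ≤ (1 - 1/(4*M)) * Kt := hfinal2
        _ ≤ Real.exp (-(1/(4*M))) * Kt := mul_le_mul_of_nonneg_right hexp hKt0
        _ = Kt * Real.exp (-(1/(4*M))) := mul_comm _ _
    have hgoal : Kt * Real.exp (-(1/(4*M)))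
        = C * Real.exp (-((((t+1 : ℕ) : ℝ) - 1) / (4 * M))) := by
      rw [hKt, hE, mul_assoc, ← Real.exp_add]
      congr 1
      push_cast
      ring
    rw [← hgoal]
    exact hfinal3
end

section
/- Suppose f satisfies quadratic growth with parameter α > 0 w.r.t. K. Denote h_1 = f(x_1) − f* and M* = max{ (β/α)(4 + 8dμ²D_{F*}²), 1/2 } for some μ > 0. Consider sequences generated as follows: x_1 ∈ V; at each step t ≥ 1, x_t = ∑_{i=1}^{k_t} λ_i v_i is a convex combination of vertices v_i ∈ V, v_{k_t+1} ∈ argmin_{u∈V} ( uᵀ∇f(x_t) + βρ_t‖u − x_t‖² ) where ρ_t ∈ [ρ_t*/2, ρ_t*] with ρ_t* = min{ √d·μ·dist(x_t, X*), 1 } / (2M*), and x_{t+1} minimizes either x ↦ xᵀ∇f(x_t) + (β/2)‖x − x_t‖² or f itself over conv(v_1,…,v_{k_t+1}). Assume additionally that for every t, letting x_t* ∈ X* be the point of X* closest to x_t, there exist Δ*_i ∈ [0,λ_i] and z ∈ F* such that x_t* = ∑_{i=1}^{k_t} (λ_i − Δ*_i)v_i + (∑Δ*_i)z and ∑_{i=1}^{k_t}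 Δ*_i ≤ min{ √d·μ·‖x_t − x_t*‖, 1 }. Then for all t ≥ 1: f(x_t) − f* ≤ h_1·exp(−3(t−1)/(16M*)). -/
set_option maxHeartbeats 1000000

open scoped RealInnerProductSpace BigOperators
open Metric Set

section Aux

open scoped RealInnerProductSpace BigOperators
open Metric Set

variable {E : Type*} [NormedAddCommGroup E] [InnerProductSpace ℝ E] [CompleteSpace E]

lemma line_hasDerivAt (a v : E) (τ : ℝ) :
    HasDerivAt (fun τ : ℝ => a + τ • v) v τ := by
  simpa using ((hasDerivAt_id τ).smul_const v).const_add a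

lemma comp_line_hasDerivAt (f : E → ℝ) (g₀ : E) (a v : E) (τ : ℝ)
    (hg : HasGradientAt f g₀ (a + τ • v)) :
    HasDerivAt (fun τ : ℝ => f (a + τ • v)) ⟪g₀, v⟫ τ := by
  have h := hg.hasFDerivAt.comp_hasDerivAt τ (line_hasDerivAt a v τ)
  simp at h
  exact h

lemma convex_grad_ineq (f : E → ℝ) (hf : ConvexOn ℝ Set.univ f) (g₀ : E) (a b : E)
    (hg : HasGradientAt f g₀ a) : f a + ⟪g₀, b - a⟫ ≤ f b := by
  have hfun : (fun τ : ℝ => f (a + τ • (b - a))) = f ∘ (AffineMap.lineMap a b) := by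
    funext τ
    simp only [Function.comp_apply, AffineMap.lineMap_apply, vsub_eq_sub, vadd_eq_add,
      add_comm]
  have hφconv : ConvexOn ℝ Set.univ (fun τ : ℝ => f (a + τ • (b - a))) := by
    rw [hfun]
    simpa using hf.comp_affineMap (AffineMap.lineMap a b)
  have hφd : HasDerivAt (fun τ : ℝ => f (a + τ • (b - a))) ⟪g₀, b - a⟫ 0 := by
    apply comp_line_hasDerivAt
    simpa using hg
  have := hφconv.le_slope_of_hasDerivAt (Set.mem_univ 0) (Set.mem_univ 1) one_pos hφd
  rw [slope_def_field] at this
  simp at this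
  linarith

lemma smooth_upper_bound (f : E → ℝ) (g : E → E) (β : ℝ) (hβ : 0 ≤ β)
    (hgrad : ∀ y, HasGradientAt f (g y) y)
    (hsm : ∀ y z, ‖g y - g z‖ ≤ β * ‖y - z‖) (a b : E) :
    f b ≤ f a + ⟪g a, b - a⟫ + β / 2 * ‖b - a‖ ^ 2 := by
  set v := b - a with hv
  set ψ : ℝ → ℝ := fun τ => f (a + τ • v) - τ * ⟪g a, v⟫ - β / 2 * ‖v‖ ^ 2 * τ ^ 2 with hψ
  have hψd : ∀ τ : ℝ, HasDerivAt ψ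
      (⟪g (a + τ • v), v⟫ - ⟪g a, v⟫ - β / 2 * ‖v‖ ^ 2 * (2 * τ)) τ := by
    intro τ
    have h1 := comp_line_hasDerivAt f (g (a + τ • v)) a v τ (hgrad _)
    have h2 : HasDerivAt (fun τ : ℝ => τ * ⟪g a, v⟫) ⟪g a, v⟫ τ :=
      hasDerivAt_mul_const _
    have h3 : HasDerivAt (fun τ : ℝ => β / 2 * ‖v‖ ^ 2 * τ ^ 2)
        (β / 2 * ‖v‖ ^ 2 * (2 * τ)) τ := by
      simpa using (hasDerivAt_pow 2 τ).const_mul (β / 2 * ‖v‖ ^ 2)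
    exact (h1.sub h2).sub h3
  have hdiff : Differentiable ℝ ψ := fun τ => (hψd τ).differentiableAt
  have hanti : AntitoneOn ψ (Icc (0:ℝ) 1) := by
    apply antitoneOn_of_deriv_nonpos (convex_Icc 0 1) hdiff.continuous.continuousOn
      (hdiff.differentiableOn)
    intro τ hτ
    rw [interior_Icc] at hτ
    rw [(hψd τ).deriv]
    have hc : ⟪g (a + τ • v) - g a, v⟫ ≤ β * τ * ‖v‖ ^ 2 := by
      calc ⟪g (a + τ • v) - g a, v⟫ ≤ ‖g (a + τ • v) - g a‖ * ‖v‖ := real_inner_le_norm _ _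
        _ ≤ (β * ‖(a + τ • v) - a‖) * ‖v‖ := by
            have := hsm (a + τ • v) a
            nlinarith [norm_nonneg v]
        _ = β * τ * ‖v‖ ^ 2 := by
            rw [add_sub_cancel_left, norm_smul]
            simp [abs_of_pos hτ.1]
            ring
    rw [inner_sub_left] at hc
    nlinarith
  have h01 := hanti (Set.left_mem_Icc.2 zero_le_one) (Set.right_mem_Icc.2 zero_le_one) zero_le_one
  have hψ0 : ψ 0 = f a := by simp [hψ]
  have hψ1 : ψ 1 = f b - ⟪g a, v⟫ - β / 2 * ‖v‖ ^ 2 := by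
    simp [hψ, hv]
  rw [hψ0, hψ1] at h01
  linarith

lemma combo_mem_hull {E : Type*} [NormedAddCommGroup E] [InnerProductSpace ℝ E]
    {ι : Type*} [Fintype ι] (c : ι → ℝ) (p : ι → E) (S : Set E)
    (hc : ∀ i, 0 ≤ c i) (hs : ∑ i, c i = 1) (hp : ∀ i, p i ∈ S) :
    ∑ i, c i • p i ∈ convexHull ℝ S := by
  have h := Finset.centerMass_mem_convexHull (Finset.univ) (fun i _ => hc i)
    (by rw [hs]; norm_num) (fun i _ => hp i)
  rwa [Finset.centerMass_eq_of_sum_1 _ _ hs] at h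

end Aux


-- polynomial inequality (P1)
lemma polyP1 (s γ Δ : ℝ) (hs : 0 ≤ s) (hΔ0 : 0 ≤ Δ) (hΔγ : Δ ≤ γ) (hγ0 : 0 < γ)
    (hγ1 : γ ≤ 1) :
    γ * (2*γ - Δ) * (s + γ)^2 + (γ*(1-Δ) + Δ*s)^2 ≤ (2 + 4*s^2) * (γ * (2*γ - Δ)) := by
  have e0 : 0 ≤ γ^2 * (3 + 8*s^2 - 2*(s+γ)^2) := by
    have h1 : (s+γ)^2 ≤ (s+1)^2 := by nlinarith
    nlinarith [sq_nonneg (1 - 2*s), sq_nonneg s, sq_nonneg γ]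
  have eγ : 0 ≤ γ^2 * ((2 + 4*s^2) - (s+γ)^2 - (1 + s - γ)^2) := by
    have : (s+γ)^2 + (1+s-γ)^2 ≤ 2 + 4*s^2 := by
      nlinarith [sq_nonneg (1-2*s), mul_nonneg (mul_nonneg hγ0.le (sub_nonneg.2 hγ1)) hs,
        mul_nonneg hγ0.le (sub_nonneg.2 hγ1)]
    nlinarith [sq_nonneg γ]
  have hkey : 0 ≤ (γ - Δ) * (γ^2 * (3 + 8*s^2 - 2*(s+γ)^2))
      + Δ * (γ^2 * ((2 + 4*s^2) - (s+γ)^2 - (1 + s - γ)^2))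
      + γ * (s-γ)^2 * Δ * (γ - Δ) := by
    have := mul_nonneg (sub_nonneg.2 hΔγ) e0
    have := mul_nonneg hΔ0 eγ
    have := mul_nonneg (mul_nonneg (mul_nonneg hγ0.le (sq_nonneg (s-γ))) hΔ0)
      (sub_nonneg.2 hΔγ)
    linarith
  -- γ * (goal RHS - goal LHS) = hkey's expression
  have hid : γ * ((2 + 4*s^2) * (γ * (2*γ - Δ)) - (γ * (2*γ - Δ) * (s + γ)^2 + (γ*(1-Δ) + Δ*s)^2))
      = (γ - Δ) * (γ^2 * (3 + 8*s^2 - 2*(s+γ)^2))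
      + Δ * (γ^2 * ((2 + 4*s^2) - (s+γ)^2 - (1 + s - γ)^2))
      + γ * (s-γ)^2 * Δ * (γ - Δ) := by ring
  nlinarith [mul_pos hγ0 hγ0]

-- stage B core
lemma quadP (N P γ Δ : ℝ) (hΔ0 : 0 ≤ Δ) (hΔγ : Δ ≤ γ) (hγ0 : 0 < γ) :
    -(γ*Δ*P^2) + (N + Δ*P)^2/2 ≤ N^2 * γ / (2*γ - Δ) := by
  have hG : 0 < 2*γ - Δ := by linarith
  rw [le_div_iff₀ hG]
  nlinarith [mul_nonneg hΔ0 (sq_nonneg (N - (2*γ - Δ)*P))]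

-- the per-step scalar endgame
lemma endgame (β α h r γ Δ D s M ρ η P N : ℝ)
    (hβ : 0 < β) (hα : 0 < α) (hh : 0 ≤ h) (hr : 0 ≤ r) (hγ0 : 0 < γ) (hγ1 : γ ≤ 1)
    (hΔ0 : 0 ≤ Δ) (hΔγ : Δ ≤ γ) (hD : 0 ≤ D) (hs : 0 ≤ s) (hγD : γ * D ≤ s * r)
    (hQG : r^2 ≤ 2/α * h) (hM1 : β/α * (4 + 8*s^2) ≤ M) (hM2 : 1/2 ≤ M)
    (hρη : ρ = η * γ) (hη1 : 1/(4*M) ≤ η) (hη2 : η ≤ 1/(2*M))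
    (hP : 0 ≤ P) (hN : 0 ≤ N) (hNb : N ≤ (1-Δ)*r + Δ*D) :
    h - η*h + η*Δ*(β*ρ)*((D+r)^2 - P^2) + β/2*η^2*(N+Δ*P)^2 ≤ (1 - 3/(16*M)) * h := by
  have hM0 : 0 < M := by linarith
  have hη0 : 0 < η := lt_of_lt_of_le (by positivity) hη1
  have hG : 0 < 2*γ - Δ := by linarith
  -- Stage A
  have hA : η*Δ*(β*ρ)*(D+r)^2 ≤ β*η^2*((s+γ)*r)^2 := by
    have h1 : γ*(D+r) ≤ (s+γ)*r := by nlinarith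
    have h2 : 0 ≤ γ*(D+r) := by nlinarith
    have h3 : (γ*(D+r))^2 ≤ ((s+γ)*r)^2 := by nlinarith
    have h4 : Δ*γ*(D+r)^2 ≤ (γ*(D+r))^2 := by nlinarith [sq_nonneg (D+r)]
    have key : Δ*γ*(D+r)^2 ≤ ((s+γ)*r)^2 := le_trans h4 h3
    have hbe : (0:ℝ) ≤ β*η^2 := by positivity
    calc η*Δ*(β*ρ)*(D+r)^2 = β*η^2*(Δ*γ*(D+r)^2) := by rw [hρη]; ring
      _ ≤ β*η^2*(((s+γ)*r)^2) := mul_le_mul_of_nonneg_left key hbe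
  -- Stage B
  have hB : -(η*Δ*(β*ρ)*P^2) + β/2*η^2*(N+Δ*P)^2 ≤ β*η^2*(N^2*γ/(2*γ-Δ)) := by
    have hq := quadP N P γ Δ hΔ0 hΔγ hγ0
    have hbe : (0:ℝ) ≤ β*η^2 := by positivity
    calc -(η*Δ*(β*ρ)*P^2) + β/2*η^2*(N+Δ*P)^2
        = β*η^2*(-(γ*Δ*P^2) + (N + Δ*P)^2/2) := by rw [hρη]; ring
      _ ≤ β*η^2*(N^2*γ/(2*γ-Δ)) := mul_le_mul_of_nonneg_left hq hbe
  -- Stage C : N^2*g/(2g-D) <= (2+4s^2 - (s+g)^2) r^2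
  have hC : N^2*γ/(2*γ-Δ) ≤ (2 + 4*s^2 - (s+γ)^2) * r^2 := by
    rw [div_le_iff₀ hG]
    have h5 : Δ*(γ*D) ≤ Δ*(s*r) := mul_le_mul_of_nonneg_left hγD hΔ0
    have hNγ : γ * N ≤ γ*(1-Δ)*r + Δ*(s*r) := by
      calc γ*N ≤ γ*((1-Δ)*r + Δ*D) := mul_le_mul_of_nonneg_left hNb hγ0.le
        _ = γ*(1-Δ)*r + Δ*(γ*D) := by ring
        _ ≤ γ*(1-Δ)*r + Δ*(s*r) := by linarith
    have h6 : 0 ≤ γ * N := mul_nonneg hγ0.le hN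
    have hNγ2 : (γ*N)^2 ≤ (γ*(1-Δ)*r + Δ*(s*r))^2 := pow_le_pow_left₀ h6 hNγ 2
    have h7 : (γ*(1-Δ)*r + Δ*(s*r))^2 = (γ*(1-Δ) + Δ*s)^2 * r^2 := by ring
    rw [h7] at hNγ2
    have hp := polyP1 s γ Δ hs hΔ0 hΔγ hγ0 hγ1
    have h8 : (γ*(1-Δ) + Δ*s)^2 ≤ (2 + 4*s^2 - (s+γ)^2) * (γ*(2*γ-Δ)) := by nlinarith
    have h12 := mul_le_mul_of_nonneg_right h8 (mul_nonneg (sq_nonneg r) hγ0.le)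
    have h11 : γ^2 * (N^2*γ) ≤ γ^2 * ((2 + 4*s^2 - (s+γ)^2) * r^2 * (2*γ-Δ)) := by
      calc γ^2*(N^2*γ) = (γ*N)^2*γ := by ring
        _ ≤ ((γ*(1-Δ) + Δ*s)^2 * r^2)*γ := mul_le_mul_of_nonneg_right hNγ2 hγ0.le
        _ = (γ*(1-Δ) + Δ*s)^2 * (r^2*γ) := by ring
        _ ≤ ((2 + 4*s^2 - (s+γ)^2) * (γ*(2*γ-Δ))) * (r^2*γ) := h12
        _ = γ^2 * ((2 + 4*s^2 - (s+γ)^2) * r^2 * (2*γ-Δ)) := by ring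
    exact le_of_mul_le_mul_left h11 (by positivity)
  -- Stage D : total junk bound
  have hsum : ((s+γ)*r)^2 + N^2*γ/(2*γ-Δ) ≤ (2+4*s^2)*r^2 := by
    have e : ((s+γ)*r)^2 = (s+γ)^2*r^2 := by ring
    rw [e]
    nlinarith [hC]
  have hD1 : β*η^2*((s+γ)*r)^2 + β*η^2*(N^2*γ/(2*γ-Δ)) ≤ β*η^2*((2+4*s^2)*r^2) := by
    have hbe : (0:ℝ) ≤ β*η^2 := by positivity
    calc β*η^2*((s+γ)*r)^2 + β*η^2*(N^2*γ/(2*γ-Δ))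
        = β*η^2*(((s+γ)*r)^2 + N^2*γ/(2*γ-Δ)) := by ring
      _ ≤ β*η^2*((2+4*s^2)*r^2) := mul_le_mul_of_nonneg_left hsum hbe
  have hD2 : β*η^2*((2+4*s^2)*r^2) ≤ η^2*(M*h) := by
    have h13 : (0:ℝ) ≤ β*(2+4*s^2) := by positivity
    have h14 : β*(2+4*s^2)*r^2 ≤ β*(2+4*s^2)*(2/α*h) := mul_le_mul_of_nonneg_left hQG h13
    have h15 : β*(2+4*s^2)*(2/α*h) = (β/α*(4+8*s^2))*h := by field_simp; ring
    have h16 : (β/α*(4+8*s^2))*h ≤ M*h := mul_le_mul_of_nonneg_right hM1 hh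
    have h17 : β*(2+4*s^2)*r^2 ≤ M*h := by rw [h15] at h14; linarith
    calc β*η^2*((2+4*s^2)*r^2) = η^2*(β*(2+4*s^2)*r^2) := by ring
      _ ≤ η^2*(M*h) := mul_le_mul_of_nonneg_left h17 (sq_nonneg η)
  -- Stage E : final
  have hscal : 3/(16*M) ≤ η - M*η^2 := by
    rw [div_le_iff₀ (by positivity : (0:ℝ) < 16*M)]
    have hu1 : 1 ≤ η*(4*M) := by
      rw [div_le_iff₀ (by positivity : (0:ℝ) < 4*M)] at hη1; linarith
    have hu2 : η*(2*M) ≤ 1 := by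
      rw [le_div_iff₀ (by positivity : (0:ℝ) < 2*M)] at hη2; linarith
    nlinarith [mul_nonneg (by linarith : (0:ℝ) ≤ η*(4*M) - 1)
      (by linarith : (0:ℝ) ≤ 1 - η*(2*M))]
  have hfin := mul_le_mul_of_nonneg_right hscal hh
  nlinarith [hA, hB, hD1, hD2, hfin]

section Main


/-- linear convergence of the NEP oracle-based fully-corrective
Frank-Wolfe variant for polytopes with adaptive step-sizes (Theorem 6). -/
theorem fw_nep_polytope_linear_rate_adaptive {d : ℕ}
    (V : Set (EuclideanSpace ℝ (Fin d))) (hVfin : V.Finite)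
    (K : Set (EuclideanSpace ℝ (Fin d))) (hK : K = convexHull ℝ V)
    (hVext : V = K.extremePoints ℝ)
    (f : EuclideanSpace ℝ (Fin d) → ℝ)
    (g : EuclideanSpace ℝ (Fin d) → EuclideanSpace ℝ (Fin d))
    (hfconv : ConvexOn ℝ Set.univ f)
    (hgrad : ∀ y, HasGradientAt f (g y) y)
    (β : ℝ) (hβ : 0 < β)
    (hsmooth : ∀ y z, ‖g y - g z‖ ≤ β * ‖y - z‖)
    (fstar : ℝ) (hfstar : ∀ y ∈ K, fstar ≤ f y)
    (Xstar : Set (EuclideanSpace ℝ (Fin d)))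
    (hXstar : Xstar = {y | y ∈ K ∧ f y = fstar}) (hXne : Xstar.Nonempty)
    -- quadratic growth
    (α : ℝ) (hα : 0 < α)
    (hQG : ∀ y ∈ K, infDist y Xstar ^ 2 ≤ 2 / α * (f y - fstar))
    -- the set F*
    (Fstar : Set (EuclideanSpace ℝ (Fin d)))
    (hFK : Fstar ⊆ K) (hFconv : Convex ℝ Fstar) (hXF : Xstar ⊆ Fstar)
    (hFvert : ∀ y ∈ Fstar, y ∈ convexHull ℝ (V ∩ Fstar))
    (DF : ℝ) (hDF : ∀ u ∈ Fstar, ∀ w ∈ Fstar, ‖u - w‖ ≤ DF)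
    -- constants
    (μ Mstar : ℝ) (hμ : 0 < μ)
    (hMstar : Mstar = max (β / α * (4 + 8 * d * μ ^ 2 * DF ^ 2)) (1 / 2))
    -- adaptive step-size parameters
    (ρ : ℕ → ℝ)
    -- the iterates and their vertex decompositions
    (x : ℕ → EuclideanSpace ℝ (Fin d))
    (k : ℕ → ℕ) (vv : ∀ t : ℕ, Fin (k t) → EuclideanSpace ℝ (Fin d))
    (lam : ∀ t : ℕ, Fin (k t) → ℝ) (w : ℕ → EuclideanSpace ℝ (Fin d))
    (hx1 : x 1 ∈ V)
    (hρ : ∀ t : ℕ, 1 ≤ t → ρ t ∈ Set.Icc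
      (min (Real.sqrt d * μ * infDist (x t) Xstar) 1 / (2 * Mstar) / 2)
      (min (Real.sqrt d * μ * infDist (x t) Xstar) 1 / (2 * Mstar)))
    (hvvV : ∀ t, 1 ≤ t → ∀ i, vv t i ∈ V)
    (hlam0 : ∀ t, 1 ≤ t → ∀ i, 0 ≤ lam t i)
    (hlam1 : ∀ t, 1 ≤ t → ∑ i, lam t i = 1)
    (hxdecomp : ∀ t, 1 ≤ t → x t = ∑ i, lam t i • vv t i)
    (hwV : ∀ t, 1 ≤ t → w t ∈ V)
    (hwopt : ∀ t, 1 ≤ t → ∀ u ∈ V,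
      ⟪g (x t), w t⟫ + β * ρ t * ‖w t - x t‖ ^ 2
        ≤ ⟪g (x t), u⟫ + β * ρ t * ‖u - x t‖ ^ 2)
    (hstep : ∀ t, 1 ≤ t →
      (x (t + 1) ∈ convexHull ℝ (insert (w t) (Set.range (vv t))) ∧
        ∀ y ∈ convexHull ℝ (insert (w t) (Set.range (vv t))),
          ⟪g (x t), x (t + 1)⟫ + β / 2 * ‖x (t + 1) - x t‖ ^ 2
            ≤ ⟪g (x t), y⟫ + β / 2 * ‖y - x t‖ ^ 2) ∨
      (x (t + 1) ∈ convexHull ℝ (insert (w t) (Set.range (vv t))) ∧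
        ∀ y ∈ convexHull ℝ (insert (w t) (Set.range (vv t))), f (x (t + 1)) ≤ f y))
    -- the vertex-decomposition property relative to the closest optimal point
    (hclose : ∀ t, 1 ≤ t → ∀ xst ∈ Xstar, (∀ y ∈ Xstar, ‖x t - xst‖ ≤ ‖x t - y‖) →
      ∃ Δ : Fin (k t) → ℝ, ∃ z ∈ Fstar,
        (∀ i, Δ i ∈ Set.Icc 0 (lam t i)) ∧
        xst = ∑ i, (lam t i - Δ i) • vv t i + (∑ i, Δ i) • z ∧
        ∑ i, Δ i ≤ min (Real.sqrt d * μ * ‖x t - xst‖) 1) :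
    ∀ t : ℕ, 1 ≤ t →
      f (x t) - fstar ≤ (f (x 1) - fstar)
        * Real.exp (-(3 * ((t : ℝ) - 1) / (16 * Mstar))) := by
  -- notation
  have hdiffble : Differentiable ℝ f := fun y => (hgrad y).differentiableAt
  have hfcont : Continuous f := hdiffble.continuous
  have hKcomp : IsCompact K := by rw [hK]; exact hVfin.isCompact_convexHull ℝ
  have hXclosed : IsClosed Xstar := by
    rw [hXstar]
    have he : {y | y ∈ K ∧ f y = fstar} = K ∩ f ⁻¹' {fstar} := by
      ext y; simp [Set.mem_inter_iff]
    rw [he]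
    exact hKcomp.isClosed.inter (isClosed_singleton.preimage hfcont)
  have hVK : V ⊆ K := by rw [hK]; exact subset_convexHull ℝ V
  have hM2 : (1:ℝ)/2 ≤ Mstar := by rw [hMstar]; exact le_max_right _ _
  have hM0 : (0:ℝ) < Mstar := by linarith
  have hFne : Fstar.Nonempty := hXne.mono hXF
  have hDF0 : 0 ≤ DF := by
    obtain ⟨u, hu⟩ := hFne
    have := hDF u hu u hu
    simpa using this
  set s : ℝ := Real.sqrt d * μ * DF with hs_def
  have hs0 : 0 ≤ s := by positivity
  have hM1 : β / α * (4 + 8 * s ^ 2) ≤ Mstar := by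
    have hsq : s ^ 2 = (d : ℝ) * μ ^ 2 * DF ^ 2 := by
      rw [hs_def, mul_pow, mul_pow, Real.sq_sqrt (Nat.cast_nonneg d)]
    rw [hsq, hMstar]
    exact le_trans (le_of_eq (by ring)) (le_max_left _ _)
  have hh1 : 0 ≤ f (x 1) - fstar := by
    have := hfstar (x 1) (hVK hx1)
    linarith
  -- the per-step contraction
  have step : ∀ t : ℕ, 1 ≤ t →
      f (x (t + 1)) - fstar ≤ (1 - 3 / (16 * Mstar)) * (f (x t) - fstar) := by
    intro t ht
    have hxK : x t ∈ K := by
      rw [hK, hxdecomp t ht]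
      exact combo_mem_hull _ _ _ (hlam0 t ht) (hlam1 t ht) (hvvV t ht)
    have hxhull : x t ∈ convexHull ℝ (insert (w t) (Set.range (vv t))) := by
      rw [hxdecomp t ht]
      exact combo_mem_hull _ _ _ (hlam0 t ht) (hlam1 t ht)
        (fun i => Set.mem_insert_of_mem _ (Set.mem_range_self i))
    have hmono : f (x (t + 1)) ≤ f (x t) := by
      rcases hstep t ht with ⟨hmem, hopt⟩ | ⟨hmem, hopt⟩
      · have h1 := smooth_upper_bound f g β hβ.le hgrad hsmooth (x t) (x (t + 1))
        have h2 := hopt (x t) hxhull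
        have e1 : ⟪g (x t), x (t + 1) - x t⟫ = ⟪g (x t), x (t + 1)⟫ - ⟪g (x t), x t⟫ :=
          inner_sub_right _ _ _
        have hzz : β / 2 * ‖x t - x t‖ ^ 2 = 0 := by simp
        linarith only [h1, h2, e1, hzz]
      · exact hopt (x t) hxhull
    -- nearest optimal point
    obtain ⟨xst, hxstX, hdisteq⟩ := hXclosed.exists_infDist_eq_dist hXne (x t)
    have hnear : ∀ y ∈ Xstar, ‖x t - xst‖ ≤ ‖x t - y‖ := by
      intro y hy
      rw [← dist_eq_norm, ← dist_eq_norm, ← hdisteq]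
      exact infDist_le_dist_of_mem hy
    set r : ℝ := ‖x t - xst‖ with hr_def
    have hrID : infDist (x t) Xstar = r := by rw [hdisteq, dist_eq_norm]
    have hr0 : 0 ≤ r := norm_nonneg _
    set h : ℝ := f (x t) - fstar with hh_def
    have hh0 : 0 ≤ h := by
      have := hfstar (x t) hxK
      rw [hh_def]
      linarith
    have hfxst : f xst = fstar := by
      rw [hXstar] at hxstX; exact hxstX.2
    rcases eq_or_lt_of_le hh0 with hzero | hpos
    · -- h = 0 case
      rw [← hzero, mul_zero]
      linarith only [hmono, hh_def, hzero]
    -- main case h > 0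
    have hrpos : 0 < r := by
      rcases eq_or_lt_of_le hr0 with h0 | h0
      · exfalso
        have hxx : x t = xst := by
          have h00 : x t - xst = 0 := by rw [← norm_eq_zero, ← hr_def, ← h0]
          rwa [sub_eq_zero] at h00
        rw [hh_def, hxx, hfxst] at hpos
        simp at hpos
      · exact h0
    have hd1 : 1 ≤ d := by
      by_contra hcon
      push_neg at hcon
      have hd0 : d = 0 := Nat.lt_one_iff.mp hcon
      subst hd0
      have : r = 0 := by
        rw [hr_def, EuclideanSpace.norm_eq]
        simp
      linarith
    have hsd : (0:ℝ) < Real.sqrt d := by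
      apply Real.sqrt_pos.2
      exact_mod_cast Nat.lt_of_lt_of_le Nat.zero_lt_one hd1
    have hρt := hρ t ht
    rw [hrID] at hρt
    set γ : ℝ := min (Real.sqrt d * μ * r) 1 with hγ_def
    obtain ⟨hρlo, hρhi⟩ := hρt
    have hγ0 : 0 < γ := lt_min (by positivity) one_pos
    have hγ1 : γ ≤ 1 := min_le_right _ _
    have hγne : γ ≠ 0 := ne_of_gt hγ0
    set η : ℝ := ρ t / γ with hη_def
    have hρη : ρ t = η * γ := by rw [hη_def, div_mul_cancel₀ _ hγne]
    have hρ0 : 0 < ρ t := by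
      have : 0 < γ / (2 * Mstar) / 2 := by positivity
      linarith only [this, hρlo]
    have hη0 : 0 < η := div_pos hρ0 hγ0
    have hη1 : 1 / (4 * Mstar) ≤ η := by
      rw [hη_def, le_div_iff₀ hγ0]
      have hMne : Mstar ≠ 0 := ne_of_gt hM0
      have e : γ / (2 * Mstar) / 2 = 1 / (4 * Mstar) * γ := by ring
      linarith only [hρlo, e]
    have hη2 : η ≤ 1 / (2 * Mstar) := by
      rw [hη_def, div_le_iff₀ hγ0]
      have e : γ / (2 * Mstar) = 1 / (2 * Mstar) * γ := by ring
      linarith only [hρhi, e]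
    have hηle1 : η ≤ 1 := by
      have e : (1:ℝ) / (2 * Mstar) ≤ 1 := by
        rw [div_le_one (by positivity)]
        linarith only [hM2]
      linarith only [e, hη2]
    -- decomposition from hclose
    obtain ⟨Δ, z, hzF, hΔmem, hxsteq, hΔsum⟩ := hclose t ht xst hxstX hnear
    set Δt : ℝ := ∑ i, Δ i with hΔt_def
    have hΔi0 : ∀ i, 0 ≤ Δ i := fun i => (hΔmem i).1
    have hΔilam : ∀ i, Δ i ≤ lam t i := fun i => (hΔmem i).2
    have hΔt0 : 0 ≤ Δt := Finset.sum_nonneg fun i _ => hΔi0 i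
    have hΔγ : Δt ≤ γ := by
      rw [hγ_def, hr_def]
      exact hΔsum
    have hxstF : xst ∈ Fstar := hXF hxstX
    have hγD : γ * DF ≤ s * r := by
      rcases le_total (Real.sqrt d * μ * r) 1 with hc | hc
      · rw [hγ_def, min_eq_left hc, hs_def]
        exact le_of_eq (by ring)
      · rw [hγ_def, min_eq_right hc]
        calc 1 * DF = DF := one_mul _
          _ ≤ (Real.sqrt d * μ * r) * DF := le_mul_of_one_le_left hDF0 hc
          _ = s * r := by rw [hs_def]; ring
    have hQGr : r ^ 2 ≤ 2 / α * h := by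
      have hq := hQG (x t) hxK
      rw [hrID, ← hh_def] at hq
      exact hq
    -- the oracle inequality vs z
    set gx := g (x t) with hgx_def
    set P : ℝ := ‖w t - x t‖ with hP_def
    have hP0 : 0 ≤ P := norm_nonneg _
    have hβρ : 0 ≤ β * ρ t := by positivity
    have hor : ⟪gx, w t⟫ + β * ρ t * P ^ 2 ≤ ⟪gx, z⟫ + β * ρ t * (DF + r) ^ 2 := by
      have hlin : IsLinearMap ℝ (fun u : EuclideanSpace ℝ (Fin d) => ⟪gx, u⟫) :=
        ⟨fun u v => inner_add_right _ _ _, fun c u => real_inner_smul_right _ _ _⟩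
      have hconvS : Convex ℝ {u : EuclideanSpace ℝ (Fin d) |
          ⟪gx, w t⟫ + β * ρ t * P ^ 2 - β * ρ t * (DF + r) ^ 2 ≤ ⟪gx, u⟫} :=
        convex_halfSpace_ge hlin _
      have hsub : V ∩ Fstar ⊆ {u : EuclideanSpace ℝ (Fin d) |
          ⟪gx, w t⟫ + β * ρ t * P ^ 2 - β * ρ t * (DF + r) ^ 2 ≤ ⟪gx, u⟫} := by
        rintro u ⟨huV, huF⟩
        have h1 := hwopt t ht u huV
        have e3 : ‖xst - x t‖ = r := by rw [hr_def]; exact norm_sub_rev _ _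
        have h2 : ‖u - x t‖ ≤ DF + r := by
          calc ‖u - x t‖ = ‖(u - xst) + (xst - x t)‖ := by
                rw [show u - x t = (u - xst) + (xst - x t) from by abel]
            _ ≤ ‖u - xst‖ + ‖xst - x t‖ := norm_add_le _ _
            _ ≤ DF + r := by
                have h4 := hDF u huF xst hxstF
                linarith only [h4, e3, le_of_eq e3]
        have h3 : ‖u - x t‖ ^ 2 ≤ (DF + r) ^ 2 := pow_le_pow_left₀ (norm_nonneg _) h2 2
        have h4 : β * ρ t * ‖u - x t‖ ^ 2 ≤ β * ρ t * (DF + r) ^ 2 :=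
          mul_le_mul_of_nonneg_left h3 hβρ
        simp only [Set.mem_setOf_eq]
        rw [hgx_def, hP_def]
        linarith only [h1, h4]
      have hz2 := convexHull_min hsub hconvS (hFvert z hzF)
      simp only [Set.mem_setOf_eq] at hz2
      linarith only [hz2]
    -- the candidate point y
    set y : EuclideanSpace ℝ (Fin d) :=
      (∑ i, (lam t i - η * Δ i) • vv t i) + (η * Δt) • w t with hy_def
    have hyhull : y ∈ convexHull ℝ (insert (w t) (Set.range (vv t))) := by
      have hcomb := combo_mem_hull
        (fun o : Option (Fin (k t)) => o.elim (η * Δt) (fun i => lam t i - η * Δ i))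
        (fun o : Option (Fin (k t)) => o.elim (w t) (fun i => vv t i))
        (insert (w t) (Set.range (vv t)))
        (by
          rintro (_ | i)
          · exact mul_nonneg hη0.le hΔt0
          · have h5 : η * Δ i ≤ Δ i := mul_le_of_le_one_left (hΔi0 i) hηle1
            have h6 := hΔilam i
            simp only [Option.elim_some]
            linarith only [h5, h6])
        (by
          rw [Fintype.sum_option]
          simp only [Option.elim_some, Option.elim_none]
          rw [Finset.sum_sub_distrib, hlam1 t ht, ← Finset.mul_sum, ← hΔt_def]
          ring)
        (by
          rintro (_ | i)
          · exact Set.mem_insert _ _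
          · exact Set.mem_insert_of_mem _ (Set.mem_range_self i))
      rw [Fintype.sum_option] at hcomb
      simp only [Option.elim_some, Option.elim_none] at hcomb
      have hyeq : y = (η * Δt) • w t + ∑ i, (lam t i - η * Δ i) • vv t i := by
        rw [hy_def]; abel
      rwa [← hyeq] at hcomb
    -- key vector identity
    have hydiff : y - x t = η • ((xst - x t) + Δt • (w t - z)) := by
      have hX := hxdecomp t ht
      have hsum1 : ∑ i, (lam t i - η * Δ i) • vv t i
          = (∑ i, lam t i • vv t i) - η • ∑ i, Δ i • vv t i := by
        rw [Finset.smul_sum, ← Finset.sum_sub_distrib]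
        congr 1
        funext i
        rw [sub_smul, smul_smul]
      have hsum2 : ∑ i, (lam t i - Δ i) • vv t i
          = (∑ i, lam t i • vv t i) - ∑ i, Δ i • vv t i := by
        rw [← Finset.sum_sub_distrib]
        congr 1
        funext i
        rw [sub_smul]
      have hz3 : xst = x t - (∑ i, Δ i • vv t i) + Δt • z := by
        rw [hxsteq, hsum2, ← hX]
      rw [hy_def, hsum1, ← hX, hz3]
      module
    -- norms
    set Bvec : EuclideanSpace ℝ (Fin d) := (xst - x t) - Δt • (z - x t) with hB_def
    set N : ℝ := ‖Bvec‖ with hN_def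
    have hN0 : 0 ≤ N := norm_nonneg _
    have hΔt1 : Δt ≤ 1 := le_trans hΔγ hγ1
    have hNb : N ≤ (1 - Δt) * r + Δt * DF := by
      have hBalt : Bvec = (1 - Δt) • (xst - x t) - Δt • (z - xst) := by
        rw [hB_def]; module
      rw [hN_def, hBalt]
      calc ‖(1 - Δt) • (xst - x t) - Δt • (z - xst)‖
          ≤ ‖(1 - Δt) • (xst - x t)‖ + ‖Δt • (z - xst)‖ := norm_sub_le _ _
        _ = (1 - Δt) * ‖xst - x t‖ + Δt * ‖z - xst‖ := by
            rw [norm_smul, norm_smul, Real.norm_eq_abs, Real.norm_eq_abs,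
              abs_of_nonneg (by linarith only [hΔt1] : (0:ℝ) ≤ 1 - Δt), abs_of_nonneg hΔt0]
        _ ≤ (1 - Δt) * r + Δt * DF := by
            have e1 : ‖xst - x t‖ = r := by rw [hr_def]; exact norm_sub_rev _ _
            have e2 : ‖z - xst‖ ≤ DF := hDF z hzF xst hxstF
            have e4 : Δt * ‖z - xst‖ ≤ Δt * DF := mul_le_mul_of_nonneg_left e2 hΔt0
            rw [e1]
            linarith only [e4]
    have hyX : ‖y - x t‖ ≤ η * (N + Δt * P) := by
      rw [hydiff]
      have hid : (xst - x t) + Δt • (w t - z) = Bvec + Δt • (w t - x t) := by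
        rw [hB_def]; module
      rw [hid, norm_smul, Real.norm_eq_abs, abs_of_nonneg hη0.le]
      have hbb : ‖Bvec + Δt • (w t - x t)‖ ≤ N + Δt * P := by
        calc ‖Bvec + Δt • (w t - x t)‖ ≤ ‖Bvec‖ + ‖Δt • (w t - x t)‖ := norm_add_le _ _
          _ = N + Δt * P := by
              rw [hN_def, norm_smul, Real.norm_eq_abs, abs_of_nonneg hΔt0, hP_def]
      exact mul_le_mul_of_nonneg_left hbb hη0.le
    have hyX2 : ‖y - x t‖ ^ 2 ≤ η ^ 2 * (N + Δt * P) ^ 2 := by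
      have hsq := pow_le_pow_left₀ (norm_nonneg (y - x t)) hyX 2
      calc ‖y - x t‖ ^ 2 ≤ (η * (N + Δt * P)) ^ 2 := hsq
        _ = η ^ 2 * (N + Δt * P) ^ 2 := by ring
    -- step inequality
    have hstep9 : f (x (t + 1)) ≤ f (x t) + ⟪gx, y - x t⟫ + β / 2 * ‖y - x t‖ ^ 2 := by
      rcases hstep t ht with ⟨hmem, hopt⟩ | ⟨hmem, hopt⟩
      · have h1 := smooth_upper_bound f g β hβ.le hgrad hsmooth (x t) (x (t + 1))
        have h2 := hopt y hyhull
        have e1 : ⟪g (x t), x (t + 1) - x t⟫ = ⟪g (x t), x (t + 1)⟫ - ⟪g (x t), x t⟫ :=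
          inner_sub_right _ _ _
        have e2 : ⟪gx, y - x t⟫ = ⟪g (x t), y⟫ - ⟪g (x t), x t⟫ := inner_sub_right _ _ _
        rw [hgx_def]
        linarith only [h1, h2, e1, e2]
      · have h1 := smooth_upper_bound f g β hβ.le hgrad hsmooth (x t) y
        have h2 := hopt y hyhull
        rw [hgx_def]
        linarith only [h1, h2]
    -- gradient inequalities
    have hconvI : ⟪gx, xst - x t⟫ ≤ -h := by
      have hcg := convex_grad_ineq f hfconv gx (x t) xst (hgrad (x t))
      rw [hfxst] at hcg
      rw [hh_def]
      linarith only [hcg]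
    have hWz : ⟪gx, w t - z⟫ ≤ β * ρ t * ((DF + r) ^ 2 - P ^ 2) := by
      have e : ⟪gx, w t - z⟫ = ⟪gx, w t⟫ - ⟪gx, z⟫ := inner_sub_right _ _ _
      rw [e]
      linarith only [hor]
    have hinner : ⟪gx, y - x t⟫ = η * (⟪gx, xst - x t⟫ + Δt * ⟪gx, w t - z⟫) := by
      rw [hydiff, real_inner_smul_right, inner_add_right, real_inner_smul_right]
    -- assemble
    have hassemble : f (x (t + 1)) - fstar ≤
        h - η * h + η * Δt * (β * ρ t) * ((DF + r) ^ 2 - P ^ 2)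
          + β / 2 * η ^ 2 * (N + Δt * P) ^ 2 := by
      have e1 : ⟪gx, xst - x t⟫ + Δt * ⟪gx, w t - z⟫
          ≤ -h + Δt * (β * ρ t * ((DF + r) ^ 2 - P ^ 2)) := by
        have e0 := mul_le_mul_of_nonneg_left hWz hΔt0
        linarith only [e0, hconvI]
      have e2 : η * (⟪gx, xst - x t⟫ + Δt * ⟪gx, w t - z⟫)
          ≤ η * (-h + Δt * (β * ρ t * ((DF + r) ^ 2 - P ^ 2))) :=
        mul_le_mul_of_nonneg_left e1 hη0.le
      have e3 : β / 2 * ‖y - x t‖ ^ 2 ≤ β / 2 * (η ^ 2 * (N + Δt * P) ^ 2) :=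
        mul_le_mul_of_nonneg_left hyX2 (by positivity)
      rw [hinner] at hstep9
      have e4 : η * (-h + Δt * (β * ρ t * ((DF + r) ^ 2 - P ^ 2)))
          = -(η * h) + η * Δt * (β * ρ t) * ((DF + r) ^ 2 - P ^ 2) := by ring
      have e5 : β / 2 * (η ^ 2 * (N + Δt * P) ^ 2)
          = β / 2 * η ^ 2 * (N + Δt * P) ^ 2 := by ring
      have e6 : f (x (t + 1)) - fstar ≤ (f (x t) - fstar)
          + η * (⟪gx, xst - x t⟫ + Δt * ⟪gx, w t - z⟫) + β / 2 * ‖y - x t‖ ^ 2 := by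
        linarith only [hstep9]
      rw [← hh_def] at e6
      calc f (x (t + 1)) - fstar
          ≤ h + η * (⟪gx, xst - x t⟫ + Δt * ⟪gx, w t - z⟫) + β / 2 * ‖y - x t‖ ^ 2 := e6
        _ ≤ h + η * (-h + Δt * (β * ρ t * ((DF + r) ^ 2 - P ^ 2)))
              + β / 2 * (η ^ 2 * (N + Δt * P) ^ 2) := add_le_add (add_le_add le_rfl e2) e3
        _ = h - η * h + η * Δt * (β * ρ t) * ((DF + r) ^ 2 - P ^ 2)
              + β / 2 * η ^ 2 * (N + Δt * P) ^ 2 := by ring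
    have hend := endgame β α h r γ Δt DF s Mstar (ρ t) η P N hβ hα hh0 hr0 hγ0 hγ1
      hΔt0 hΔγ hDF0 hs0 hγD hQGr hM1 hM2 hρη hη1 hη2 hP0 hN0 hNb
    linarith only [hassemble, hend]
  -- the induction
  intro t ht
  induction t, ht using Nat.le_induction with
  | base =>
    norm_num
  | succ n hn ih =>
    rw [show ((n + 1 : ℕ) : ℝ) = (n : ℝ) + 1 from by push_cast; ring]
    have hstepn := step n hn
    set u : ℝ := 3 / (16 * Mstar) with hu_def
    have hu0 : 0 ≤ u := by positivity
    have hu38 : u ≤ 3 / 8 := by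
      rw [hu_def, div_le_div_iff₀ (by positivity) (by norm_num)]
      linarith
    have h1u : 0 ≤ 1 - u := by linarith
    have hexp : 1 - u ≤ Real.exp (-u) := by
      have := Real.add_one_le_exp (-u)
      linarith
    have hEpos : 0 ≤ (f (x 1) - fstar) * Real.exp (-(3 * ((n : ℝ) - 1) / (16 * Mstar))) :=
      mul_nonneg hh1 (Real.exp_pos _).le
    calc f (x (n + 1)) - fstar ≤ (1 - u) * (f (x n) - fstar) := hstepn
      _ ≤ (1 - u) * ((f (x 1) - fstar) * Real.exp (-(3 * ((n : ℝ) - 1) / (16 * Mstar)))) :=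
          mul_le_mul_of_nonneg_left ih h1u
      _ ≤ Real.exp (-u) * ((f (x 1) - fstar) * Real.exp (-(3 * ((n : ℝ) - 1) / (16 * Mstar)))) :=
          mul_le_mul_of_nonneg_right hexp hEpos
      _ = (f (x 1) - fstar) * Real.exp (-(3 * (((n : ℕ) + 1 : ℝ) - 1) / (16 * Mstar))) := by
          rw [mul_comm (Real.exp (-u)), mul_assoc, ← Real.exp_add]
          congr 2
          rw [hu_def]
          push_cast
          field_simp
          ring
end Main
end

section
/- Let (a_t)_{t≥1} and (b_t)_{t≥1} be sequences of non-negative real numbers such that for all t ≥ 1: a_{t+1} ≤ (1 − 2/(t+1))·a_t + b_t/(t+1)². Then for all t ≥ 2: a_t ≤ (1/t²)·∑_{k=1}^{t−1} b_k. In particular, if b_t ≤ M for all t ≥ 1 for some M > 0, then a_t ≤ M/(t+1) for all t ≥ 2. -/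
open scoped BigOperators

/-- the recursion lemma (Lemma 3 of the paper). -/
theorem fw_recursion_lemma (a b : ℕ → ℝ)
    (ha : ∀ t : ℕ, 1 ≤ t → 0 ≤ a t) (hb : ∀ t : ℕ, 1 ≤ t → 0 ≤ b t)
    (hrec : ∀ t : ℕ, 1 ≤ t →
      a (t + 1) ≤ (1 - 2 / ((t : ℝ) + 1)) * a t + b t / ((t : ℝ) + 1) ^ 2) :
    (∀ t : ℕ, 2 ≤ t → a t ≤ 1 / (t : ℝ) ^ 2 * ∑ k ∈ Finset.Icc 1 (t - 1), b k) ∧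
    (∀ M : ℝ, 0 < M → (∀ t : ℕ, 1 ≤ t → b t ≤ M) →
      ∀ t : ℕ, 2 ≤ t → a t ≤ M / ((t : ℝ) + 1)) := by
  have main : ∀ t : ℕ, 2 ≤ t → a t ≤ 1 / (t : ℝ) ^ 2 * ∑ k ∈ Finset.Icc 1 (t - 1), b k := by
    intro t ht
    induction t, ht using Nat.le_induction with
    | base =>
      have h := hrec 1 le_rfl
      have ha1 := ha 1 le_rfl
      norm_num at h ⊢
      linarith
    | succ t ht ih =>
      have h := hrec t (by omega)
      have hS : (0:ℝ) ≤ ∑ k ∈ Finset.Icc 1 (t - 1), b k :=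
        Finset.sum_nonneg fun k hk => hb k (Finset.mem_Icc.mp hk).1
      have ht2 : (2:ℝ) ≤ (t:ℝ) := by exact_mod_cast ht
      have htpos : (0:ℝ) < (t:ℝ) := by linarith
      have hcoef : (0:ℝ) ≤ 1 - 2 / ((t:ℝ) + 1) := by
        rw [sub_nonneg, div_le_one (by linarith)]; linarith
      have step : a (t+1) ≤ (1 - 2 / ((t:ℝ)+1)) * (1 / (t:ℝ)^2 * ∑ k ∈ Finset.Icc 1 (t - 1), b k)
          + b t / ((t:ℝ)+1)^2 :=
        h.trans (by gcongr)
      have hsum : ∑ k ∈ Finset.Icc 1 (t + 1 - 1), b k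
          = (∑ k ∈ Finset.Icc 1 (t - 1), b k) + b t := by
        have : t + 1 - 1 = t := rfl
        rw [this]
        have h2 : t - 1 + 1 = t := by omega
        rw [← h2, Finset.sum_Icc_succ_top (by omega), h2]
      rw [hsum]
      push_cast
      refine step.trans ?_
      have key : (1 - 2 / ((t:ℝ)+1)) * (1 / (t:ℝ)^2) ≤ 1 / ((t:ℝ)+1)^2 := by
        have ht1 : (0:ℝ) < (t:ℝ)+1 := by linarith
        have e : (1 - 2/((t:ℝ)+1)) * (1/(t:ℝ)^2) = ((t:ℝ)-1)/(((t:ℝ)+1)*(t:ℝ)^2) := by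
          field_simp; ring
        rw [e, div_le_div_iff₀ (by positivity) (by positivity)]
        nlinarith
      have hb' := hb t (by omega)
      calc (1 - 2 / ((t:ℝ)+1)) * (1 / (t:ℝ)^2 * ∑ k ∈ Finset.Icc 1 (t - 1), b k) + b t / ((t:ℝ)+1)^2
          = ((1 - 2 / ((t:ℝ)+1)) * (1 / (t:ℝ)^2)) * (∑ k ∈ Finset.Icc 1 (t - 1), b k) + b t / ((t:ℝ)+1)^2 := by ring
        _ ≤ (1 / ((t:ℝ)+1)^2) * (∑ k ∈ Finset.Icc 1 (t - 1), b k) + b t / ((t:ℝ)+1)^2 := by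
            gcongr
        _ = 1 / ((t:ℝ)+1)^2 * ((∑ k ∈ Finset.Icc 1 (t - 1), b k) + b t) := by ring
  refine ⟨main, ?_⟩
  intro M hM hbM t ht
  have h := main t ht
  have hsum : ∑ k ∈ Finset.Icc 1 (t - 1), b k ≤ (t - 1 : ℕ) * M := by
    calc ∑ k ∈ Finset.Icc 1 (t - 1), b k ≤ ∑ k ∈ Finset.Icc 1 (t - 1), M :=
          Finset.sum_le_sum fun k hk => hbM k (Finset.mem_Icc.mp hk).1
      _ = (t - 1 : ℕ) * M := by
          rw [Finset.sum_const, Nat.card_Icc]; simp [nsmul_eq_mul]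
  have ht2 : (2:ℝ) ≤ (t:ℝ) := by exact_mod_cast ht
  have hcast : ((t - 1 : ℕ) : ℝ) = (t:ℝ) - 1 := by
    have : 1 ≤ t := by omega
    push_cast [this]
    ring
  refine h.trans ?_
  rw [hcast] at hsum
  have : 1 / (t:ℝ)^2 * ∑ k ∈ Finset.Icc 1 (t - 1), b k ≤ 1 / (t:ℝ)^2 * (((t:ℝ) - 1) * M) := by
    gcongr
  refine this.trans ?_
  rw [div_mul_eq_mul_div, one_mul, div_le_div_iff₀ (by positivity) (by linarith)]
  nlinarith
end

section
/- Let x_t ∈ K, let x* ∈ X* be the point of X* closest to x_t, let g ∈ ℝ^d be arbitrary, let η ∈ [0,1] and β > 0, and let v_t ∈ argmin_{v∈V} ( gᵀv + (βη/2)‖v − x_t‖² ). Then gᵀv_t + (βη/2)‖v_t − x_t‖² ≤ gᵀx* + (βη/2)·min{ (D*)² + dist(x_t, X*)², D_K² }. -/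
open scoped RealInnerProductSpace BigOperators
open Metric

lemma exists_le_weighted {ι : Type*} (t : Finset ι) (w F : ι → ℝ)
    (hw : ∀ i ∈ t, 0 ≤ w i) (hw1 : ∑ i ∈ t, w i = 1) :
    ∃ i ∈ t, F i ≤ ∑ i ∈ t, w i * F i := by
  set A := ∑ i ∈ t, w i * F i with hA
  set t' := t.filter (fun i => w i ≠ 0) with ht'
  have hsumw : ∑ i ∈ t', w i = 1 := by
    rw [ht', Finset.sum_filter_ne_zero, hw1]
  have hsumwf : ∑ i ∈ t', w i * F i = A := by
    rw [hA, ht']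
    exact Finset.sum_filter_of_ne (fun i _ h => fun h0 => h (by rw [h0]; ring))
  have hne : t'.Nonempty := by
    rcases Finset.eq_empty_or_nonempty t' with h | h
    · exfalso; rw [h, Finset.sum_empty] at hsumw; norm_num at hsumw
    · exact h
  have hle : ∑ i ∈ t', w i * F i ≤ ∑ i ∈ t', w i * A := by
    rw [← Finset.sum_mul, hsumw, one_mul, hsumwf]
  obtain ⟨i, hi, hile⟩ := Finset.exists_le_of_sum_le hne hle
  have hiw : 0 < w i := lt_of_le_of_ne (hw i (Finset.mem_filter.mp hi).1)
    (Ne.symm (Finset.mem_filter.mp hi).2)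
  exact ⟨i, (Finset.mem_filter.mp hi).1, le_of_mul_le_mul_left hile hiw⟩

lemma exists_good_point {d : ℕ} (S : Set (EuclideanSpace ℝ (Fin d)))
    (x g xt : EuclideanSpace ℝ (Fin d)) (hx : x ∈ convexHull ℝ S)
    (c Dstar : ℝ) (hc : 0 ≤ c)
    (hD : ∀ u ∈ S, ∀ v ∈ S, ‖u - v‖ ≤ Dstar) :
    ∃ u ∈ S, ⟪g, u⟫ + c * ‖u - xt‖ ^ 2 ≤ ⟪g, x⟫ + c * (Dstar ^ 2 + ‖x - xt‖ ^ 2) := by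
  have hball : ∀ v ∈ S, ‖x - v‖ ≤ Dstar := by
    intro v hv
    have hb : convexHull ℝ S ⊆ Metric.closedBall v Dstar := by
      apply convexHull_min _ (convex_closedBall _ _)
      intro u hu
      rw [Metric.mem_closedBall, dist_eq_norm]
      exact hD u hu v hv
    have := hb hx
    rwa [Metric.mem_closedBall, dist_eq_norm] at this
  rw [convexHull_eq] at hx
  obtain ⟨ι, t, w, z, hw0, hw1, hzS, hcm⟩ := hx
  have hxsum : ∑ i ∈ t, w i • z i = x := by
    rw [← Finset.centerMass_eq_of_sum_1 _ _ hw1]; exact hcm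
  obtain ⟨i, hi, hile⟩ := exists_le_weighted t w
    (fun i => ⟪g, z i⟫ + c * ‖z i - xt‖ ^ 2) hw0 hw1
  refine ⟨z i, hzS i hi, hile.trans ?_⟩
  have h1 : ∑ j ∈ t, w j * ⟪g, z j⟫ = ⟪g, x⟫ := by
    rw [← hxsum, inner_sum]
    exact Finset.sum_congr rfl (fun j _ => (real_inner_smul_right g (z j) (w j)).symm)
  have h0 : ∑ j ∈ t, w j • (z j - x) = (0 : EuclideanSpace ℝ (Fin d)) := by
    simp only [smul_sub, Finset.sum_sub_distrib, hxsum, ← Finset.sum_smul, hw1, one_smul,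
      sub_self]
  have hcross : ∑ j ∈ t, w j * ⟪z j - x, x - xt⟫ = 0 := by
    calc ∑ j ∈ t, w j * ⟪z j - x, x - xt⟫
        = ∑ j ∈ t, ⟪w j • (z j - x), x - xt⟫ := by
          exact Finset.sum_congr rfl (fun j _ => (real_inner_smul_left _ _ _).symm)
      _ = ⟪∑ j ∈ t, w j • (z j - x), x - xt⟫ := (sum_inner _ _ _).symm
      _ = 0 := by rw [h0, inner_zero_left]
  have hexp : ∀ j, ‖z j - xt‖ ^ 2
      = ‖z j - x‖ ^ 2 + 2 * ⟪z j - x, x - xt⟫ + ‖x - xt‖ ^ 2 := by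
    intro j
    have h := norm_add_sq_real (z j - x) (x - xt)
    rw [sub_add_sub_cancel] at h
    linarith
  have hvar : ∑ j ∈ t, w j * ‖z j - x‖ ^ 2 ≤ Dstar ^ 2 := by
    calc ∑ j ∈ t, w j * ‖z j - x‖ ^ 2 ≤ ∑ j ∈ t, w j * Dstar ^ 2 := by
          apply Finset.sum_le_sum
          intro j hj
          apply mul_le_mul_of_nonneg_left _ (hw0 j hj)
          have := hball (z j) (hzS j hj)
          have h2 : ‖z j - x‖ ≤ Dstar := by rwa [norm_sub_rev] at this
          exact pow_le_pow_left₀ (norm_nonneg _) h2 2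
      _ = Dstar ^ 2 := by rw [← Finset.sum_mul, hw1, one_mul]
  have h2 : ∑ j ∈ t, w j * ‖z j - xt‖ ^ 2 ≤ Dstar ^ 2 + ‖x - xt‖ ^ 2 := by
    have : ∑ j ∈ t, w j * ‖z j - xt‖ ^ 2
        = ∑ j ∈ t, w j * ‖z j - x‖ ^ 2 + 2 * ∑ j ∈ t, w j * ⟪z j - x, x - xt⟫
          + (∑ j ∈ t, w j) * ‖x - xt‖ ^ 2 := by
      rw [Finset.mul_sum, Finset.sum_mul, ← Finset.sum_add_distrib, ← Finset.sum_add_distrib]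
      exact Finset.sum_congr rfl (fun j _ => by rw [hexp j]; ring)
    rw [this, hcross, hw1]
    linarith
  have hsplit : ∑ j ∈ t, w j * (⟪g, z j⟫ + c * ‖z j - xt‖ ^ 2)
      = ∑ j ∈ t, w j * ⟪g, z j⟫ + c * ∑ j ∈ t, w j * ‖z j - xt‖ ^ 2 := by
    rw [Finset.mul_sum, ← Finset.sum_add_distrib]
    exact Finset.sum_congr rfl (fun j _ => by ring)
  calc ∑ j ∈ t, w j * (⟪g, z j⟫ + c * ‖z j - xt‖ ^ 2)
      = ∑ j ∈ t, w j * ⟪g, z j⟫ + c * ∑ j ∈ t, w j * ‖z j - xt‖ ^ 2 := hsplit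
    _ ≤ ⟪g, x⟫ + c * (Dstar ^ 2 + ‖x - xt‖ ^ 2) := by
        rw [h1]
        exact add_le_add_right (mul_le_mul_of_nonneg_left h2 hc) _

lemma exists_inner_le {d : ℕ} (S : Set (EuclideanSpace ℝ (Fin d)))
    (x g : EuclideanSpace ℝ (Fin d)) (hx : x ∈ convexHull ℝ S) :
    ∃ u ∈ S, ⟪g, u⟫ ≤ ⟪g, x⟫ := by
  rw [convexHull_eq] at hx
  obtain ⟨ι, t, w, z, hw0, hw1, hzS, hcm⟩ := hx
  have hxsum : ∑ i ∈ t, w i • z i = x := by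
    rw [← Finset.centerMass_eq_of_sum_1 _ _ hw1]; exact hcm
  obtain ⟨i, hi, hile⟩ := exists_le_weighted t w (fun i => ⟪g, z i⟫) hw0 hw1
  refine ⟨z i, hzS i hi, hile.trans_eq ?_⟩
  rw [← hxsum, inner_sum]
  exact Finset.sum_congr rfl (fun j _ => (real_inner_smul_right g (z j) (w j)).symm)

/-- the key deterministic inequality for the stochastic
Frank-Wolfe variant with a nearest extreme point oracle. -/
theorem fw_nep_stochastic_key_inequality {d : ℕ}
    (K : Set (EuclideanSpace ℝ (Fin d)))
    (hKconv : Convex ℝ K) (hKcomp : IsCompact K)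
    (V : Set (EuclideanSpace ℝ (Fin d))) (hV : V = K.extremePoints ℝ)
    (DK : ℝ) (hDK : ∀ u ∈ K, ∀ w ∈ K, ‖u - w‖ ≤ DK)
    (f : EuclideanSpace ℝ (Fin d) → ℝ) (hfconv : ConvexOn ℝ Set.univ f)
    (fstar : ℝ) (hfstar : ∀ y ∈ K, fstar ≤ f y)
    (Xstar : Set (EuclideanSpace ℝ (Fin d)))
    (hXstar : Xstar = {y | y ∈ K ∧ f y = fstar}) (hXne : Xstar.Nonempty)
    (Sstar : Set (EuclideanSpace ℝ (Fin d))) (hSV : Sstar ⊆ V)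
    (hSconv : Xstar ⊆ convexHull ℝ Sstar)
    (Dstar : ℝ) (hDstar : ∀ u ∈ Sstar, ∀ v ∈ Sstar, ‖u - v‖ ≤ Dstar)
    (xt : EuclideanSpace ℝ (Fin d)) (hxt : xt ∈ K)
    -- the closest optimal solution to x_t
    (xstar : EuclideanSpace ℝ (Fin d)) (hxstarX : xstar ∈ Xstar)
    (hxstarclose : ∀ y ∈ Xstar, ‖xt - xstar‖ ≤ ‖xt - y‖)
    -- an arbitrary vector g (e.g. a stochastic gradient estimate)
    (g : EuclideanSpace ℝ (Fin d))
    (η β : ℝ) (hη : η ∈ Set.Icc (0:ℝ) 1) (hβ : 0 < β)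
    (vt : EuclideanSpace ℝ (Fin d)) (hvtV : vt ∈ V)
    (hvt : ∀ v ∈ V, ⟪g, vt⟫ + β * η / 2 * ‖vt - xt‖ ^ 2
        ≤ ⟪g, v⟫ + β * η / 2 * ‖v - xt‖ ^ 2) :
    ⟪g, vt⟫ + β * η / 2 * ‖vt - xt‖ ^ 2
      ≤ ⟪g, xstar⟫ + β * η / 2 * min (Dstar ^ 2 + infDist xt Xstar ^ 2) (DK ^ 2) := by
  set c := β * η / 2 with hc_def
  have hc : 0 ≤ c := by
    have := hη.1
    positivity
  have hxsconv : xstar ∈ convexHull ℝ Sstar := hSconv hxstarX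
  -- norm xstar - xt equals infDist
  have hinf : ‖xstar - xt‖ = infDist xt Xstar := by
    have h1 : infDist xt Xstar ≤ dist xt xstar := infDist_le_dist_of_mem hxstarX
    have h2 : dist xt xstar ≤ infDist xt Xstar := by
      by_contra hlt
      push_neg at hlt
      obtain ⟨y, hy, hdy⟩ := (infDist_lt_iff hXne).mp hlt
      have := hxstarclose y hy
      rw [dist_eq_norm, dist_eq_norm] at hdy
      linarith
    rw [norm_sub_rev, ← dist_eq_norm]
    exact le_antisymm h2 h1
  -- first bound
  have hbound1 : ⟪g, vt⟫ + c * ‖vt - xt‖ ^ 2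
      ≤ ⟪g, xstar⟫ + c * (Dstar ^ 2 + infDist xt Xstar ^ 2) := by
    obtain ⟨u, huS, hu⟩ := exists_good_point Sstar xstar g xt hxsconv c Dstar hc hDstar
    calc ⟪g, vt⟫ + c * ‖vt - xt‖ ^ 2 ≤ ⟪g, u⟫ + c * ‖u - xt‖ ^ 2 := hvt u (hSV huS)
      _ ≤ ⟪g, xstar⟫ + c * (Dstar ^ 2 + ‖xstar - xt‖ ^ 2) := hu
      _ = ⟪g, xstar⟫ + c * (Dstar ^ 2 + infDist xt Xstar ^ 2) := by rw [hinf]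
  -- second bound
  have hbound2 : ⟪g, vt⟫ + c * ‖vt - xt‖ ^ 2 ≤ ⟪g, xstar⟫ + c * DK ^ 2 := by
    obtain ⟨u, huS, hu⟩ := exists_inner_le Sstar xstar g hxsconv
    have huK : u ∈ K := by
      have := hSV huS
      rw [hV] at this
      exact this.1
    have hnorm : ‖u - xt‖ ≤ DK := hDK u huK xt hxt
    have hDK0 : 0 ≤ DK := le_trans (norm_nonneg _) (hDK xt hxt xt hxt)
    have hsq : ‖u - xt‖ ^ 2 ≤ DK ^ 2 := pow_le_pow_left₀ (norm_nonneg _) hnorm 2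
    calc ⟪g, vt⟫ + c * ‖vt - xt‖ ^ 2 ≤ ⟪g, u⟫ + c * ‖u - xt‖ ^ 2 := hvt u (hSV huS)
      _ ≤ ⟪g, xstar⟫ + c * DK ^ 2 :=
          add_le_add hu (mul_le_mul_of_nonneg_left hsq hc)
  rcases le_total (Dstar ^ 2 + infDist xt Xstar ^ 2) (DK ^ 2) with h | h
  · rw [min_eq_left h]; exact hbound1
  · rw [min_eq_right h]; exact hbound2
end

section
/- Let x_t ∈ K, let x* ∈ X* be the point of X* closest to x_t, let g ∈ ℝ^d, η ∈ [0,1], let v_t ∈ argmin_{v∈V} ( gᵀv + (βη/2)‖v − x_t‖² ), and set x_{t+1} = (1−η)x_t + η v_t. Then, with M̄ = min{ (D*)² + dist(x_t, X*)², D_K² }: f(x_{t+1}) − f(x_t) ≤ η(f(x*) − f(x_t)) + η·D_K·‖g − ∇f(x_t)‖ + (βη²/2)·M̄. -/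
open scoped RealInnerProductSpace BigOperators
open Metric

variable {E : Type*} [NormedAddCommGroup E] [InnerProductSpace ℝ E] [CompleteSpace E]

lemma line_hasDerivAt_s12 (f : E → ℝ) (gf : E → E)
    (hg : ∀ y, HasGradientAt f (gf y) y) (x h : E) (t : ℝ) :
    HasDerivAt (fun s : ℝ => f (x + s • h)) ⟪gf (x + t • h), h⟫ t := by
  have hc : HasDerivAt (fun s : ℝ => x + s • h) h t := by
    simpa using ((hasDerivAt_id t).smul_const h).const_add x
  have := (hg (x + t • h)).hasFDerivAt.comp_hasDerivAt t hc
  exact this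
lemma grad_convex_ineq_s12 (f : E → ℝ) (gf : E → E)
    (hconv : ConvexOn ℝ Set.univ f) (hg : ∀ y, HasGradientAt f (gf y) y) (x y : E) :
    ⟪gf x, y - x⟫ ≤ f y - f x := by
  set φ : ℝ → ℝ := fun t => f (x + t • (y - x)) with hφ
  have hφconv : ConvexOn ℝ Set.univ φ := by
    have := hconv.comp_affineMap (AffineMap.lineMap x y : ℝ →ᵃ[ℝ] E)
    simp only [Set.preimage_univ] at this
    have key : φ = f ∘ (AffineMap.lineMap x y : ℝ →ᵃ[ℝ] E) := by
      funext t
      simp [φ, AffineMap.lineMap_apply, Function.comp]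
      congr 1
      module
    rw [key]; exact this
  have hd : HasDerivAt φ ⟪gf (x + (0:ℝ) • (y - x)), y - x⟫ 0 :=
    line_hasDerivAt_s12 f gf hg x (y - x) 0
  have := hφconv.le_slope_of_hasDerivAt (Set.mem_univ 0) (Set.mem_univ 1) zero_lt_one hd
  rw [slope_def_field] at this
  simp only [zero_smul, add_zero] at this
  have h0 : φ 0 = f x := by simp [φ]
  have h1 : φ 1 = f y := by simp [φ]
  rw [h1, h0] at this
  norm_num at this
  exact this

lemma descent_lemma (f : E → ℝ) (gf : E → E) (β : ℝ)
    (hg : ∀ y, HasGradientAt f (gf y) y)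
    (hL : ∀ y z, ‖gf y - gf z‖ ≤ β * ‖y - z‖) (x y : E) :
    f y ≤ f x + ⟪gf x, y - x⟫ + β / 2 * ‖y - x‖ ^ 2 := by
  set h : E := y - x with hh
  set χ : ℝ → ℝ := fun t => β / 2 * ‖h‖ ^ 2 * t ^ 2 + ⟪gf x, h⟫ * t
      + (f x - f (x + t • h)) with hχ
  have hder : ∀ t : ℝ, HasDerivAt χ
      (β / 2 * ‖h‖ ^ 2 * (2 * t) + ⟪gf x, h⟫ - ⟪gf (x + t • h), h⟫) t := by
    intro t
    have h1 : HasDerivAt (fun t : ℝ => β / 2 * ‖h‖ ^ 2 * t ^ 2)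
        (β / 2 * ‖h‖ ^ 2 * (2 * t)) t := by
      have := (hasDerivAt_pow 2 t).const_mul (β / 2 * ‖h‖ ^ 2)
      exact this.congr_deriv (by push_cast; ring)
    have h2 : HasDerivAt (fun t : ℝ => ⟪gf x, h⟫ * t) ⟪gf x, h⟫ t := by
      simpa using (hasDerivAt_id t).const_mul ⟪gf x, h⟫
    have h3 : HasDerivAt (fun t : ℝ => f x - f (x + t • h))
        (-⟪gf (x + t • h), h⟫) t := by
      simpa using (line_hasDerivAt_s12 f gf hg x h t).const_sub (f x)
    have H := (h1.add h2).add h3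
    exact H.congr_deriv (by ring)
  have hmono : MonotoneOn χ (Set.Icc (0:ℝ) 1) := by
    apply monotoneOn_of_deriv_nonneg (convex_Icc 0 1)
    · exact fun t _ => ((hder t).continuousAt).continuousWithinAt
    · exact fun t _ => ((hder t).differentiableAt).differentiableWithinAt
    · intro t ht
      rw [interior_Icc] at ht
      rw [(hder t).deriv]
      have hb : ⟪gf (x + t • h) - gf x, h⟫ ≤ β * t * ‖h‖ ^ 2 := by
        calc ⟪gf (x + t • h) - gf x, h⟫ ≤ ‖gf (x + t • h) - gf x‖ * ‖h‖ :=
              real_inner_le_norm _ _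
        _ ≤ β * ‖(x + t • h) - x‖ * ‖h‖ := by
              have := hL (x + t • h) x
              have hn : (0:ℝ) ≤ ‖h‖ := norm_nonneg _
              nlinarith [this]
        _ = β * t * ‖h‖ ^ 2 := by
              rw [add_sub_cancel_left, norm_smul, Real.norm_eq_abs,
                abs_of_pos ht.1]
              ring
      rw [inner_sub_left] at hb
      linarith
  have h01 := hmono (Set.mem_Icc.2 ⟨le_refl 0, zero_le_one⟩)
      (Set.mem_Icc.2 ⟨zero_le_one, le_refl 1⟩) zero_le_one
  have hχ0 : χ 0 = 0 := by simp [hχ]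
  have hχ1 : χ 1 = β / 2 * ‖h‖ ^ 2 + ⟪gf x, h⟫ + (f x - f y) := by
    simp [hχ, hh]
  rw [hχ0, hχ1] at h01
  linarith

/-- the per-step inequality for the stochastic Frank-Wolfe
variant with a nearest extreme point oracle (from Lemma 4 of the paper). -/
theorem fw_nep_stochastic_one_step {d : ℕ}
    (K : Set (EuclideanSpace ℝ (Fin d)))
    (hKconv : Convex ℝ K) (hKcomp : IsCompact K)
    (V : Set (EuclideanSpace ℝ (Fin d))) (hV : V = K.extremePoints ℝ)
    (DK : ℝ) (hDK : ∀ u ∈ K, ∀ w ∈ K, ‖u - w‖ ≤ DK)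
    (f : EuclideanSpace ℝ (Fin d) → ℝ)
    (gradf : EuclideanSpace ℝ (Fin d) → EuclideanSpace ℝ (Fin d))
    (hfconv : ConvexOn ℝ Set.univ f)
    (hgrad : ∀ y, HasGradientAt f (gradf y) y)
    (fstar : ℝ) (hfstar : ∀ y ∈ K, fstar ≤ f y)
    (Xstar : Set (EuclideanSpace ℝ (Fin d)))
    (hXstar : Xstar = {y | y ∈ K ∧ f y = fstar}) (hXne : Xstar.Nonempty)
    (Sstar : Set (EuclideanSpace ℝ (Fin d))) (hSV : Sstar ⊆ V)
    (hSconv : Xstar ⊆ convexHull ℝ Sstar)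
    (Dstar : ℝ) (hDstar : ∀ u ∈ Sstar, ∀ v ∈ Sstar, ‖u - v‖ ≤ Dstar)
    (xt : EuclideanSpace ℝ (Fin d)) (hxt : xt ∈ K)
    -- the closest optimal solution to x_t
    (xstar : EuclideanSpace ℝ (Fin d)) (hxstarX : xstar ∈ Xstar)
    (hxstarclose : ∀ y ∈ Xstar, ‖xt - xstar‖ ≤ ‖xt - y‖)
    -- an arbitrary vector g (e.g. a stochastic gradient estimate)
    (g : EuclideanSpace ℝ (Fin d))
    (η β : ℝ) (hη : η ∈ Set.Icc (0:ℝ) 1) (hβ : 0 < β)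
    (hsmooth : ∀ y z, ‖gradf y - gradf z‖ ≤ β * ‖y - z‖)
    (vt : EuclideanSpace ℝ (Fin d)) (hvtV : vt ∈ V)
    (hvt : ∀ v ∈ V, ⟪g, vt⟫ + β * η / 2 * ‖vt - xt‖ ^ 2
        ≤ ⟪g, v⟫ + β * η / 2 * ‖v - xt‖ ^ 2)
    (xnext : EuclideanSpace ℝ (Fin d))
    (hxnext : xnext = (1 - η) • xt + η • vt) :
    f xnext - f xt ≤ η * (f xstar - f xt) + η * DK * ‖g - gradf xt‖
      + β * η ^ 2 / 2 * min (Dstar ^ 2 + infDist xt Xstar ^ 2) (DK ^ 2) := by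
  have hη0 : (0:ℝ) ≤ η := hη.1
  have hVK : V ⊆ K := hV ▸ (extremePoints_subset)
  have hvtK : vt ∈ K := hVK hvtV
  have hxsK : xstar ∈ K := by rw [hXstar] at hxstarX; exact hxstarX.1
  set c : ℝ := β * η / 2 with hcdef
  set M : ℝ := min (Dstar ^ 2 + infDist xt Xstar ^ 2) (DK ^ 2) with hMdef
  -- extract the convex combination
  have hxs_hull : xstar ∈ convexHull ℝ Sstar := hSconv hxstarX
  rw [convexHull_eq] at hxs_hull
  obtain ⟨ι, t, w, z, hw0, hw1, hzS, hcm⟩ := hxs_hull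
  rw [Finset.centerMass_eq_of_sum_1 _ _ hw1] at hcm
  have htne : t.Nonempty := Finset.nonempty_of_sum_ne_zero (by rw [hw1]; exact one_ne_zero)
  have hD0 : 0 ≤ Dstar := by
    obtain ⟨i0, hi0⟩ := htne
    have := hDstar (z i0) (hzS i0 hi0) (z i0) (hzS i0 hi0)
    simpa using this
  -- distance to the optimal set
  have hdist : ‖xstar - xt‖ ≤ infDist xt Xstar := by
    have h1 : dist xt xstar ≤ infDist xt Xstar := by
      by_contra hlt
      push_neg at hlt
      obtain ⟨y, hy, hylt⟩ := (infDist_lt_iff hXne).1 hlt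
      have h2 := hxstarclose y hy
      rw [dist_eq_norm, dist_eq_norm] at hylt
      linarith
    rw [dist_eq_norm, norm_sub_rev] at h1
    exact h1
  -- the variance decomposition
  have hsum0 : ∑ i ∈ t, w i • (z i - xstar) = 0 := by
    simp only [smul_sub]
    rw [Finset.sum_sub_distrib, ← Finset.sum_smul, hw1, one_smul, hcm, sub_self]
  have hcross : ∑ i ∈ t, w i * ⟪z i - xstar, xstar - xt⟫ = 0 := by
    have : ∑ i ∈ t, w i * ⟪z i - xstar, xstar - xt⟫
        = ⟪∑ i ∈ t, w i • (z i - xstar), xstar - xt⟫ := by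
      rw [sum_inner]
      exact Finset.sum_congr rfl fun i _ => (real_inner_smul_left _ _ _).symm
    rw [this, hsum0, inner_zero_left]
  have hvar : ∑ i ∈ t, w i * ‖z i - xt‖ ^ 2
      = ∑ i ∈ t, w i * ‖z i - xstar‖ ^ 2 + ‖xstar - xt‖ ^ 2 := by
    have hpt : ∀ i, ‖z i - xt‖ ^ 2
        = ‖z i - xstar‖ ^ 2 + 2 * ⟪z i - xstar, xstar - xt⟫ + ‖xstar - xt‖ ^ 2 := by
      intro i
      have he : z i - xt = (z i - xstar) + (xstar - xt) := by abel
      rw [he, norm_add_sq_real]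
    calc ∑ i ∈ t, w i * ‖z i - xt‖ ^ 2
        = ∑ i ∈ t, (w i * ‖z i - xstar‖ ^ 2 + 2 * (w i * ⟪z i - xstar, xstar - xt⟫)
            + w i * ‖xstar - xt‖ ^ 2) :=
          Finset.sum_congr rfl fun i _ => by rw [hpt i]; ring
      _ = ∑ i ∈ t, w i * ‖z i - xstar‖ ^ 2
            + 2 * ∑ i ∈ t, w i * ⟪z i - xstar, xstar - xt⟫
            + (∑ i ∈ t, w i) * ‖xstar - xt‖ ^ 2 := by
          rw [Finset.sum_add_distrib, Finset.sum_add_distrib, ← Finset.mul_sum,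
            ← Finset.sum_mul]
      _ = ∑ i ∈ t, w i * ‖z i - xstar‖ ^ 2 + ‖xstar - xt‖ ^ 2 := by
          rw [hcross, hw1]; ring
  -- the key bound on the weighted average of squared distances
  have hS1 : ∑ i ∈ t, w i * ‖z i - xt‖ ^ 2 ≤ M := by
    refine le_min ?_ ?_
    · -- Dstar^2 + infDist^2 branch
      have hzi : ∀ i ∈ t, ‖z i - xstar‖ ≤ Dstar := by
        intro i hi
        have hball : convexHull ℝ Sstar ⊆ closedBall (z i) Dstar := by
          apply convexHull_min _ (convex_closedBall _ _)
          intro y hy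
          rw [mem_closedBall, dist_eq_norm, norm_sub_rev]
          exact hDstar (z i) (hzS i hi) y hy
        have := hball (hSconv hxstarX)
        rw [mem_closedBall, dist_eq_norm, norm_sub_rev] at this
        exact this
      have h1 : ∑ i ∈ t, w i * ‖z i - xstar‖ ^ 2 ≤ Dstar ^ 2 := by
        calc ∑ i ∈ t, w i * ‖z i - xstar‖ ^ 2 ≤ ∑ i ∈ t, w i * Dstar ^ 2 :=
              Finset.sum_le_sum fun i hi => mul_le_mul_of_nonneg_left
                (pow_le_pow_left₀ (norm_nonneg _) (hzi i hi) 2) (hw0 i hi)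
          _ = Dstar ^ 2 := by rw [← Finset.sum_mul, hw1, one_mul]
      have h2 : ‖xstar - xt‖ ^ 2 ≤ infDist xt Xstar ^ 2 :=
        pow_le_pow_left₀ (norm_nonneg _) hdist 2
      rw [hvar]; linarith
    · -- DK^2 branch
      calc ∑ i ∈ t, w i * ‖z i - xt‖ ^ 2 ≤ ∑ i ∈ t, w i * DK ^ 2 :=
            Finset.sum_le_sum fun i hi => mul_le_mul_of_nonneg_left
              (pow_le_pow_left₀ (norm_nonneg _)
                (hDK (z i) (hVK (hSV (hzS i hi))) xt hxt) 2) (hw0 i hi)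
        _ = DK ^ 2 := by rw [← Finset.sum_mul, hw1, one_mul]
  -- the oracle inequality averaged over the combination
  have hKEY : ⟪g, vt⟫ + c * ‖vt - xt‖ ^ 2
      ≤ ⟪g, xstar⟫ + c * (∑ i ∈ t, w i * ‖z i - xt‖ ^ 2) := by
    have h1 : ∀ i ∈ t, w i * (⟪g, vt⟫ + c * ‖vt - xt‖ ^ 2)
        ≤ w i * (⟪g, z i⟫ + c * ‖z i - xt‖ ^ 2) := fun i hi =>
      mul_le_mul_of_nonneg_left (hvt (z i) (hSV (hzS i hi))) (hw0 i hi)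
    have h2 := Finset.sum_le_sum h1
    rw [← Finset.sum_mul, hw1, one_mul] at h2
    have h3 : ∑ i ∈ t, w i * (⟪g, z i⟫ + c * ‖z i - xt‖ ^ 2)
        = ⟪g, xstar⟫ + c * (∑ i ∈ t, w i * ‖z i - xt‖ ^ 2) := by
      have h4 : ∑ i ∈ t, w i * ⟪g, z i⟫ = ⟪g, xstar⟫ := by
        rw [← hcm, inner_sum]
        exact Finset.sum_congr rfl fun i _ => by
          rw [real_inner_smul_right]
      calc ∑ i ∈ t, w i * (⟪g, z i⟫ + c * ‖z i - xt‖ ^ 2)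
          = ∑ i ∈ t, (w i * ⟪g, z i⟫ + c * (w i * ‖z i - xt‖ ^ 2)) :=
            Finset.sum_congr rfl fun i _ => by ring
        _ = ⟪g, xstar⟫ + c * (∑ i ∈ t, w i * ‖z i - xt‖ ^ 2) := by
            rw [Finset.sum_add_distrib, h4, ← Finset.mul_sum]
    rw [h3] at h2
    exact h2
  have hKEY2 : ⟪g, vt⟫ + c * ‖vt - xt‖ ^ 2 ≤ ⟪g, xstar⟫ + c * M := by
    have hc0 : 0 ≤ c := by positivity
    have := mul_le_mul_of_nonneg_left hS1 hc0
    linarith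
  -- convexity inequality
  have hA : ⟪gradf xt, xstar - xt⟫ ≤ f xstar - f xt :=
    grad_convex_ineq_s12 f gradf hfconv hgrad xt xstar
  -- Cauchy-Schwarz error term
  have hCS : ⟪g - gradf xt, xstar - vt⟫ ≤ ‖g - gradf xt‖ * DK := by
    calc ⟪g - gradf xt, xstar - vt⟫ ≤ ‖g - gradf xt‖ * ‖xstar - vt‖ :=
          real_inner_le_norm _ _
      _ ≤ ‖g - gradf xt‖ * DK :=
          mul_le_mul_of_nonneg_left (hDK xstar hxsK vt hvtK) (norm_nonneg _)
  -- linear identities among inner products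
  have hI1 : ⟪gradf xt, vt - xt⟫ = (⟪g, vt⟫ - ⟪g, xt⟫) + (⟪gradf xt, vt - xt⟫ - ⟪g, vt - xt⟫) := by
    rw [inner_sub_right (𝕜 := ℝ) g vt xt]; ring
  have hI2 : ⟪g, vt - xt⟫ = ⟪g, vt⟫ - ⟪g, xt⟫ := inner_sub_right _ _ _
  have hI3 : ⟪g, xstar - xt⟫ = ⟪g, xstar⟫ - ⟪g, xt⟫ := inner_sub_right _ _ _
  have hI4 : ⟪g, xstar - xt⟫ = ⟪gradf xt, xstar - xt⟫ + ⟪g - gradf xt, xstar - xt⟫ := by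
    rw [inner_sub_left (𝕜 := ℝ)]; ring
  have hI5 : (⟪gradf xt, vt - xt⟫ - ⟪g, vt - xt⟫) + ⟪g - gradf xt, xstar - xt⟫
      = ⟪g - gradf xt, xstar - vt⟫ := by
    simp only [inner_sub_left (𝕜 := ℝ), inner_sub_right (𝕜 := ℝ)]
    ring
  -- the per-step master inequality at the inner-product level
  have hstar : ⟪gradf xt, vt - xt⟫ + c * ‖vt - xt‖ ^ 2
      ≤ (f xstar - f xt) + ‖g - gradf xt‖ * DK + c * M := by
    linarith
  -- the descent lemma
  have hdiff : xnext - xt = η • (vt - xt) := by rw [hxnext]; module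
  have hdescent : f xnext ≤ f xt + η * ⟪gradf xt, vt - xt⟫
      + β / 2 * (η ^ 2 * ‖vt - xt‖ ^ 2) := by
    have := descent_lemma f gradf β hgrad hsmooth xt xnext
    rw [hdiff, real_inner_smul_right, norm_smul, Real.norm_eq_abs,
      abs_of_nonneg hη0, mul_pow] at this
    exact this
  have hmul := mul_le_mul_of_nonneg_left hstar hη0
  have hexp : β / 2 * (η ^ 2 * ‖vt - xt‖ ^ 2) = η * (c * ‖vt - xt‖ ^ 2) := by
    rw [hcdef]; ring
  have hexp2 : η * ((f xstar - f xt) + ‖g - gradf xt‖ * DK + c * M)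
      = η * (f xstar - f xt) + η * DK * ‖g - gradf xt‖ + β * η ^ 2 / 2 * M := by
    rw [hcdef]; ring
  rw [mul_add] at hmul
  linarith [hmul, hdescent, hexp, hexp2]
end
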